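/- arXiv:0903.4237 — 5 statements merged into one kernel-verified Lean document; each statement's English description precedes it below -/
import Mathlib

section
/- Let k be a positive integer and q a prime power. If S is a multiset of integers of size (q^k − 1)/(q − 1) with split difference δ_q(S) > −q^{k−1}, then S is q-projection-forcing. -/
open Matrix

noncomputable section

instance instFiniteProjectivization (K V : Type*) [DivisionRing K] [AddCommGroup V] [Module K V]
    [Finite V] : Finite (Projectivization K V) :=
  Quotient.finite _

noncomputable instance instFintypeProjectivization (K V : Type*) [DivisionRing K] [AddCommGroup V]
    [Module K V] [Finite V] : Fintype (Projectivization K V) :=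
  Fintype.ofFinite _

noncomputable instance instDecEqProjectivization (K V : Type*) [DivisionRing K] [AddCommGroup V]
    [Module K V] : DecidableEq (Projectivization K V) :=
  Classical.decEq _

/-- The projective multiset of weight changes of a linear map between linear codes
`U ⊆ F^n` and `V ⊆ F^m`: the multiset `{w(u) - w(φ(u)) : u ∈ P(U)}`. -/
def projWeightChanges {F : Type} [Field F] [Fintype F] [DecidableEq F] {n m : ℕ}
    {U : Submodule F (Fin n → F)} {V : Submodule F (Fin m → F)} (φ : U →ₗ[F] V) : Multiset ℤ :=
  (Finset.univ : Finset (Projectivization F U)).val.map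
    fun p => (hammingNorm (p.rep : Fin n → F) : ℤ) - (hammingNorm ((φ p.rep : V) : Fin m → F) : ℤ)

/-- S is realized by some F-linear map between linear codes. -/
def Realizes (F : Type) [Field F] [Fintype F] [DecidableEq F] (S : Multiset ℤ) : Prop :=
  ∃ (n m : ℕ) (U : Submodule F (Fin n → F)) (V : Submodule F (Fin m → F)) (φ : U →ₗ[F] V),
    projWeightChanges φ = S

/-- A coordinate projection up to monomial equivalence: multiplication by a matrix
with at most one nonzero entry in each row and each column. -/
def IsProjection {F : Type} [Field F] [Fintype F] [DecidableEq F] {n m : ℕ}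
    {U : Submodule F (Fin n → F)} {V : Submodule F (Fin m → F)} (φ : U →ₗ[F] V) : Prop :=
  ∃ M : Matrix (Fin m) (Fin n) F,
    (∀ u : U, ((φ u : Fin m → F)) = M.mulVec (u : Fin n → F)) ∧
    (∀ i j j', M i j ≠ 0 → M i j' ≠ 0 → j = j') ∧
    (∀ i i' j, M i j ≠ 0 → M i' j ≠ 0 → i = i')

/-- A monomial equivalence: multiplication by an n × n matrix with exactly one
nonzero entry in each row and each column. -/
def IsMonomialEquiv {F : Type} [Field F] [Fintype F] [DecidableEq F] {n : ℕ}
    {U V : Submodule F (Fin n → F)} (φ : U →ₗ[F] V) : Prop :=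
  ∃ M : Matrix (Fin n) (Fin n) F,
    (∀ u : U, ((φ u : Fin n → F)) = M.mulVec (u : Fin n → F)) ∧
    (∀ i, ∃! j, M i j ≠ 0) ∧
    (∀ j, ∃! i, M i j ≠ 0)

/-- S is q-projection-forcing: every linear map over a field of order q realizing S
is a projection. -/
def ProjectionForcing (q : ℕ) (S : Multiset ℤ) : Prop :=
  ∀ (F : Type) [Field F] [Fintype F] [DecidableEq F], Fintype.card F = q →
    ∀ (n m : ℕ) (U : Submodule F (Fin n → F)) (V : Submodule F (Fin m → F))
      (φ : U →ₗ[F] V), projWeightChanges φ = S → IsProjection φ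

/-- The matrix M_{k,q}: rows and columns indexed by points of PG(k-1,q), with (v,w)
entry 0 if v ⬝ w = 0 and 1 otherwise. -/
def Mkq (F : Type) [Field F] [Fintype F] [DecidableEq F] (k : ℕ) :
    Matrix (Projectivization F (Fin k → F)) (Projectivization F (Fin k → F)) ℝ :=
  Matrix.of fun v w => if dotProduct v.rep w.rep = 0 then (0 : ℝ) else 1

/-- The q-ary split difference of a multiset S. -/
def splitDiff (q k : ℕ) (S : Multiset ℤ) : ℤ :=
  (((S.sort (· ≤ ·)).take (q ^ (k - 1))).sum) -
    ((q : ℤ) - 1) * (((S.sort (· ≤ ·)).drop (q ^ (k - 1))).sum)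

end

section Aux

open Matrix Finset Module Projectivization

set_option linter.unusedSectionVars false

/-- sorted take is minimal among sub-multisets of the same size -/
lemma sorted_take_sum_le (l : List ℤ) (hl : l.Pairwise (· ≤ ·)) (t : Multiset ℤ)
    (ht : t ≤ ↑l) : ((l.take (Multiset.card t)).sum ≤ t.sum) := by
  induction l generalizing t with
  | nil =>
      have : t = 0 := Multiset.le_zero.mp (by simpa using ht)
      simp [this]
  | cons a l ih =>
      have hl' : l.Pairwise (· ≤ ·) := hl.of_cons
      have ha : ∀ b ∈ l, a ≤ b := fun b hb => (List.pairwise_cons.mp hl).1 b hb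
      by_cases hmem : a ∈ t
      · set t' := t.erase a with ht'
        have htt : t = a ::ₘ t' := (Multiset.cons_erase hmem).symm
        have ht'l : t' ≤ ↑l := by
          have := Multiset.erase_le_erase a ht
          simpa [ht'] using this
        have hcard : Multiset.card t = Multiset.card t' + 1 := by
          rw [htt]; simp
        rw [hcard, htt]
        simp only [List.take_succ_cons, List.sum_cons, Multiset.sum_cons]
        exact add_le_add_right (ih hl' t' ht'l) a
      · have htl : t ≤ ↑l := by
          rw [Multiset.le_iff_count] at ht ⊢
          intro b
          rcases eq_or_ne b a with rfl | hba
          · simp [Multiset.count_eq_zero_of_notMem hmem]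
          · have := ht b
            simpa [Multiset.count_cons, List.count_cons, hba, hba.symm] using this
        rcases Nat.eq_zero_or_pos (Multiset.card t) with h0 | hpos
        · simp [h0, Multiset.card_eq_zero.mp h0]
        · obtain ⟨j, hj⟩ : ∃ j, Multiset.card t = j + 1 :=
            ⟨Multiset.card t - 1, (Nat.succ_pred_eq_of_pos hpos).symm⟩
          rw [hj]
          have hjlen : j + 1 ≤ l.length := by
            have := Multiset.card_le_card htl
            rw [hj] at this; simpa using this
          have hjl : j < l.length := by omega
          have key : a + (l.take j).sum ≤ (l.take (j+1)).sum := by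
            rw [List.sum_take_succ l j hjl]
            have : a ≤ l[j] := ha _ (List.getElem_mem hjl)
            omega
          calc ((a :: l).take (j+1)).sum = a + (l.take j).sum := by simp
            _ ≤ (l.take (j+1)).sum := key
            _ ≤ t.sum := by have := ih hl' t htl; rw [hj] at this; simpa using this

variable {F : Type} [Field F] [Fintype F] [DecidableEq F] {k : ℕ}

/-- Fiber counting: scalar-invariant sets in `W` vs sets of projective points. -/
lemma card_filter_eq_card_proj_mul {W : Type*} [AddCommGroup W] [Module F W] [Fintype W]
    [DecidableEq W] [Nontrivial W] (Q : W → Prop) [DecidablePred Q]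
    (hQ0 : ¬ Q 0) (hQs : ∀ (c : F) (x : W), c ≠ 0 → (Q (c • x) ↔ Q x)) :
    (univ.filter Q).card
      = (univ.filter (fun p : Projectivization F W => Q p.rep)).card * (Fintype.card F - 1) := by
  classical
  have : Nonempty (Projectivization F W) := by
    obtain ⟨x, hx⟩ := exists_ne (0 : W)
    exact ⟨mk F x hx⟩
  set f : W → Projectivization F W := fun y => if h : y = 0 then Classical.arbitrary _ else mk F y h with hf
  have hmap : ∀ y ∈ univ.filter Q, f y ∈ univ.filter (fun p : Projectivization F W => Q p.rep) := by
    intro y hy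
    rw [mem_filter] at hy ⊢
    have hy0 : y ≠ 0 := fun h => hQ0 (h ▸ hy.2)
    refine ⟨mem_univ _, ?_⟩
    have hfy : f y = mk F y hy0 := by simp [hf, hy0]
    obtain ⟨a, ha⟩ := exists_smul_eq_mk_rep F y hy0
    rw [hfy, ← ha, Units.smul_def, hQs _ y (Units.ne_zero a)]
    exact hy.2
  rw [Finset.card_eq_sum_card_fiberwise hmap]
  have hfib : ∀ p ∈ univ.filter (fun p : Projectivization F W => Q p.rep),
      ((univ.filter Q).filter (fun y => f y = p)).card = Fintype.card F - 1 := by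
    intro p hp
    have hp' : Q p.rep := (mem_filter.mp hp).2
    have hrep : p.rep ≠ 0 := p.rep_nonzero
    rw [Finset.filter_filter]
    have hcard : Fintype.card F - 1 = (univ.erase (0:F)).card := by
      rw [Finset.card_erase_of_mem (mem_univ _), Finset.card_univ]
    rw [hcard, ← Finset.filter_ne' univ 0]
    refine (Finset.card_bij (fun c _ => c • p.rep) ?_ ?_ ?_).symm
    · intro c hc
      rw [mem_filter] at hc ⊢
      have hc0 : c ≠ 0 := hc.2
      have hyne : c • p.rep ≠ 0 := smul_ne_zero hc0 hrep
      refine ⟨mem_univ _, (hQs c _ hc0).mpr hp', ?_⟩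
      have h1 : f (c • p.rep) = mk F (c • p.rep) hyne := by simp [hf, hyne]
      have h2 : mk F (c • p.rep) hyne = mk F p.rep hrep :=
        (mk_eq_mk_iff' F _ _ hyne hrep).mpr ⟨c, rfl⟩
      rw [h1, h2, p.mk_rep]
    · intro c hc c' hc' hcc
      have h0 : (c - c') • p.rep = 0 := by rw [sub_smul, hcc, sub_self]
      rcases smul_eq_zero.mp h0 with h | h
      · exact sub_eq_zero.mp h
      · exact absurd h hrep
    · intro y hy
      rw [mem_filter] at hy
      have hy0 : y ≠ 0 := fun h => hQ0 (h ▸ hy.2.1)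
      have hfy : f y = mk F y hy0 := by simp [hf, hy0]
      have : mk F y hy0 = mk F p.rep hrep := by rw [← hfy, hy.2.2, p.mk_rep]
      obtain ⟨a, ha⟩ := (mk_eq_mk_iff' F y p.rep hy0 hrep).mp this
      have ha0 : a ≠ 0 := by rintro rfl; rw [zero_smul] at ha; exact hy0 ha.symm
      exact ⟨a, mem_filter.mpr ⟨mem_univ _, ha0⟩, ha⟩
  rw [Finset.sum_congr rfl hfib, Finset.sum_const, smul_eq_mul]

/-- card of the projectivization of a finite vector space. -/
lemma card_proj_mul {W : Type*} [AddCommGroup W] [Module F W] [Fintype W]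
    [DecidableEq W] [Nontrivial W] :
    Fintype.card (Projectivization F W) * (Fintype.card F - 1) = Fintype.card W - 1 := by
  classical
  have := card_filter_eq_card_proj_mul (F := F) (W := W) (fun y => y ≠ 0)
    (by simp) (by intro c x hc; simp [smul_ne_zero_iff, hc])
  rw [Finset.filter_ne' univ 0, Finset.card_erase_of_mem (mem_univ _),
    Finset.card_univ] at this
  have h2 : filter (fun p : Projectivization F W => (fun y => y ≠ 0) p.rep) univ = univ :=
    Finset.filter_true_of_mem fun p _ => p.rep_nonzero
  rw [h2, Finset.card_univ] at this
  exact this.symm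

/-- dot product with a fixed vector, as a linear map. -/
def dlin (v : Fin k → F) : (Fin k → F) →ₗ[F] F where
  toFun y := v ⬝ᵥ y
  map_add' a b := dotProduct_add v a b
  map_smul' c a := by simp [dotProduct_smul, smul_eq_mul]

lemma dlin_surj (v : Fin k → F) (hv : v ≠ 0) : Function.Surjective (dlin v) := by
  intro a
  obtain ⟨i, hi⟩ := Function.ne_iff.mp hv
  have hi' : v i ≠ 0 := by simpa using hi
  refine ⟨Pi.single i ((v i)⁻¹ * a), ?_⟩
  simp only [dlin, LinearMap.coe_mk, AddHom.coe_mk, dotProduct_single]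
  field_simp

lemma finrank_ker_dlin (v : Fin k → F) (hv : v ≠ 0) :
    finrank F (LinearMap.ker (dlin v)) = k - 1 := by
  have h := LinearMap.finrank_range_add_finrank_ker (dlin v)
  rw [LinearMap.range_eq_top.mpr (dlin_surj v hv), finrank_top, finrank_self] at h
  have hpi : finrank F (Fin k → F) = k := by simp
  omega

lemma card_ker_dlin (v : Fin k → F) (hv : v ≠ 0) :
    (univ.filter (fun y : Fin k → F => v ⬝ᵥ y = 0)).card = Fintype.card F ^ (k - 1) := by
  classical
  have h1 : Fintype.card (LinearMap.ker (dlin v)) = Fintype.card F ^ (k - 1) := by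
    rw [card_eq_pow_finrank (K := F), finrank_ker_dlin v hv]
  rw [← Fintype.card_subtype]
  rw [← h1]
  exact Fintype.card_congr (Equiv.subtypeEquivRight (by
    intro y; simp [LinearMap.mem_ker, dlin])) |>.symm

lemma dual_prop (v w : Fin k → F) (hle : ∀ y, v ⬝ᵥ y = 0 → w ⬝ᵥ y = 0) (hv : v ≠ 0) :
    ∃ c : F, w = c • v := by
  obtain ⟨i, hi⟩ := Function.ne_iff.mp hv
  set y₀ : Fin k → F := Pi.single i (v i)⁻¹ with hy₀
  have hi' : v i ≠ 0 := by simpa using hi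
  have hvy₀ : v ⬝ᵥ y₀ = 1 := by
    rw [hy₀, dotProduct_single]
    field_simp
  refine ⟨w ⬝ᵥ y₀, funext fun j => ?_⟩
  have hker : v ⬝ᵥ (Pi.single j 1 - (v ⬝ᵥ Pi.single j 1) • y₀) = 0 := by
    rw [dotProduct_sub, dotProduct_smul, smul_eq_mul, hvy₀, mul_one, sub_self]
  have := hle _ hker
  rw [dotProduct_sub, dotProduct_smul, smul_eq_mul, sub_eq_zero] at this
  have hj : w ⬝ᵥ Pi.single j 1 = w j := by rw [dotProduct_single, mul_one]
  have hj' : v ⬝ᵥ Pi.single j 1 = v j := by rw [dotProduct_single, mul_one]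
  rw [hj, hj'] at this
  rw [this]
  simp [mul_comm]

lemma card_ker_inf (v w : Fin k → F) (hv : v ≠ 0) (hw : w ≠ 0)
    (hvw : ¬ ∃ c : F, w = c • v) :
    (univ.filter (fun y : Fin k → F => v ⬝ᵥ y = 0 ∧ w ⬝ᵥ y = 0)).card
      = Fintype.card F ^ (k - 2) := by
  classical
  have hwv : ¬ ∃ c : F, v = c • w := by
    rintro ⟨c, rfl⟩
    have hc : c ≠ 0 := by rintro rfl; simp at hv
    exact hvw ⟨c⁻¹, by rw [smul_smul, inv_mul_cancel₀ hc, one_smul]⟩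
  have h1 : ¬ (LinearMap.ker (dlin v) ≤ LinearMap.ker (dlin w)) := by
    intro hle
    exact hvw (dual_prop v w (fun y hy => hle (by simpa [dlin, LinearMap.mem_ker] using hy)) hv)
  have h2 : ¬ (LinearMap.ker (dlin w) ≤ LinearMap.ker (dlin v)) := by
    intro hle
    exact hwv (dual_prop w v (fun y hy => hle (by simpa [dlin, LinearMap.mem_ker] using hy)) hw)
  have hlt : LinearMap.ker (dlin v) < LinearMap.ker (dlin v) ⊔ LinearMap.ker (dlin w) := by
    refine lt_of_le_of_ne le_sup_left (fun h => h2 ?_)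
    exact le_trans le_sup_right h.ge
  have hsup : finrank F ↥(LinearMap.ker (dlin v) ⊔ LinearMap.ker (dlin w)) = k := by
    have hle := Submodule.finrank_le (LinearMap.ker (dlin v) ⊔ LinearMap.ker (dlin w))
    have hlt' := Submodule.finrank_lt_finrank_of_lt hlt
    rw [finrank_ker_dlin v hv] at hlt'
    have hpi : finrank F (Fin k → F) = k := by simp
    omega
  have hinf := Submodule.finrank_sup_add_finrank_inf_eq
    (LinearMap.ker (dlin v)) (LinearMap.ker (dlin w))
  rw [hsup, finrank_ker_dlin v hv, finrank_ker_dlin w hw] at hinf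
  have hfr : finrank F ↥(LinearMap.ker (dlin v) ⊓ LinearMap.ker (dlin w)) = k - 2 := by omega
  have h1' : Fintype.card ↥(LinearMap.ker (dlin v) ⊓ LinearMap.ker (dlin w))
      = Fintype.card F ^ (k - 2) := by
    rw [card_eq_pow_finrank (K := F), hfr]
  rw [← Fintype.card_subtype, ← h1']
  exact Fintype.card_congr (Equiv.subtypeEquivRight (by
    intro y; simp [Submodule.mem_inf, LinearMap.mem_ker, dlin])) |>.symm

lemma card_proj_dot_ne (hk : 0 < k) (v : Fin k → F) (hv : v ≠ 0) :
    (univ.filter (fun p : Projectivization F (Fin k → F) => v ⬝ᵥ p.rep ≠ 0)).card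
      = Fintype.card F ^ (k - 1) := by
  classical
  haveI : Nonempty (Fin k) := ⟨⟨0, hk⟩⟩
  haveI : Nontrivial (Fin k → F) := Function.nontrivial
  have hq1 : 1 ≤ Fintype.card F := Fintype.card_pos
  have hq2 : 2 ≤ Fintype.card F := Fintype.one_lt_card
  have hfib := card_filter_eq_card_proj_mul (F := F) (W := Fin k → F)
    (fun y => v ⬝ᵥ y ≠ 0) (by simp) (by
      intro c x hc
      show ¬ (v ⬝ᵥ (c • x)) = 0 ↔ ¬ (v ⬝ᵥ x) = 0
      rw [dotProduct_smul, smul_eq_mul]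
      simp [hc])
  have hsplit := Finset.card_filter_add_card_filter_not
    (s := (univ : Finset (Fin k → F))) (p := fun y => v ⬝ᵥ y = 0)
  rw [Finset.card_univ, Fintype.card_fun, Fintype.card_fin, card_ker_dlin v hv] at hsplit
  have haff : (univ.filter (fun y : Fin k → F => v ⬝ᵥ y ≠ 0)).card
      = Fintype.card F ^ (k - 1) * (Fintype.card F - 1) := by
    have hpow : Fintype.card F ^ k = Fintype.card F ^ (k - 1) * Fintype.card F := by
      rw [← pow_succ]; congr 1; omega
    rw [hpow] at hsplit
    zify [hq1] at hsplit ⊢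
    linear_combination hsplit
  rw [haff] at hfib
  exact (Nat.eq_of_mul_eq_mul_right (by omega) hfib.symm)

lemma card_proj_dot_pair_ne (v w : Fin k → F) (hv : v ≠ 0) (hw : w ≠ 0)
    (hvw : ¬ ∃ c : F, w = c • v) :
    (univ.filter (fun p : Projectivization F (Fin k → F) =>
        v ⬝ᵥ p.rep ≠ 0 ∧ w ⬝ᵥ p.rep ≠ 0)).card
      = Fintype.card F ^ (k - 2) * (Fintype.card F - 1) := by
  classical
  have hk2 : 2 ≤ k := by
    by_contra h
    push_neg at h
    interval_cases k
    · exact hv (funext fun i => i.elim0)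
    · have hv0 : v 0 ≠ 0 := by
        intro h0; apply hv; funext i; fin_cases i; exact h0
      apply hvw
      refine ⟨w 0 * (v 0)⁻¹, funext fun i => ?_⟩
      fin_cases i
      simp only [Pi.smul_apply, smul_eq_mul]
      field_simp
      rfl
  have hk : 0 < k := by omega
  haveI : Nonempty (Fin k) := ⟨⟨0, hk⟩⟩
  haveI : Nontrivial (Fin k → F) := Function.nontrivial
  have hq1 : 1 ≤ Fintype.card F := Fintype.card_pos
  have hq2 : 2 ≤ Fintype.card F := Fintype.one_lt_card
  have hfib := card_filter_eq_card_proj_mul (F := F) (W := Fin k → F)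
    (fun y => v ⬝ᵥ y ≠ 0 ∧ w ⬝ᵥ y ≠ 0) (by simp) (by
      intro c x hc
      show (¬ (v ⬝ᵥ (c • x)) = 0 ∧ ¬ (w ⬝ᵥ (c • x)) = 0) ↔ _
      rw [dotProduct_smul, dotProduct_smul, smul_eq_mul, smul_eq_mul]
      simp [hc])
  have hor : (univ.filter (fun y : Fin k → F => v ⬝ᵥ y = 0 ∨ w ⬝ᵥ y = 0)).card
      + (univ.filter (fun y : Fin k → F => v ⬝ᵥ y = 0 ∧ w ⬝ᵥ y = 0)).card
      = (univ.filter (fun y : Fin k → F => v ⬝ᵥ y = 0)).card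
      + (univ.filter (fun y : Fin k → F => w ⬝ᵥ y = 0)).card := by
    rw [Finset.filter_or, Finset.filter_and]
    exact Finset.card_union_add_card_inter _ _
  have hsplit := Finset.card_filter_add_card_filter_not
    (s := (univ : Finset (Fin k → F))) (p := fun y => v ⬝ᵥ y = 0 ∨ w ⬝ᵥ y = 0)
  have hne : (univ.filter (fun y : Fin k → F => ¬ (v ⬝ᵥ y = 0 ∨ w ⬝ᵥ y = 0)))
      = (univ.filter (fun y : Fin k → F => v ⬝ᵥ y ≠ 0 ∧ w ⬝ᵥ y ≠ 0)) := by
    apply Finset.filter_congr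
    intro y _
    simp [not_or]
  rw [hne, Finset.card_univ, Fintype.card_fun, Fintype.card_fin] at hsplit
  rw [card_ker_dlin v hv, card_ker_dlin w hw, card_ker_inf v w hv hw hvw] at hor
  have haff : (univ.filter (fun y : Fin k → F => v ⬝ᵥ y ≠ 0 ∧ w ⬝ᵥ y ≠ 0)).card
      = (Fintype.card F ^ (k - 2) * (Fintype.card F - 1)) * (Fintype.card F - 1) := by
    have hpow1 : Fintype.card F ^ (k - 1)
        = Fintype.card F ^ (k - 2) * Fintype.card F := by
      rw [← pow_succ]; congr 1; omega
    have hpow0 : Fintype.card F ^ k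
        = Fintype.card F ^ (k - 2) * Fintype.card F * Fintype.card F := by
      rw [← pow_succ, ← pow_succ]; congr 1; omega
    rw [hpow0] at hsplit
    rw [hpow1] at hor
    zify [hq1] at hsplit hor ⊢
    linear_combination hsplit - hor
  rw [haff] at hfib
  exact (Nat.eq_of_mul_eq_mul_right (by omega) hfib.symm)

/-- Gluing fiberwise embeddings into one injection compatible with labels. -/
lemma exists_inj_of_fiber_card_le {α β γ : Type*} [Fintype α] [Fintype β] [DecidableEq γ]
    (f : α → γ) (g : β → γ)
    (hle : ∀ c : γ, Fintype.card {a : α // f a = c} ≤ Fintype.card {b : β // g b = c}) :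
    ∃ ι : α → β, Function.Injective ι ∧ ∀ a, g (ι a) = f a := by
  classical
  have hemb : ∀ c : γ, Nonempty ({a : α // f a = c} ↪ {b : β // g b = c}) :=
    fun c => Function.Embedding.nonempty_of_card_le (hle c)
  let emb : ∀ c : γ, {a : α // f a = c} ↪ {b : β // g b = c} :=
    fun c => Classical.choice (hemb c)
  let E : (Σ c : γ, {a : α // f a = c}) ↪ (Σ c : γ, {b : β // g b = c}) :=
    Function.Embedding.sigmaMap (Function.Embedding.refl γ) emb
  let ι : α → β := fun a => (Equiv.sigmaFiberEquiv g) (E ((Equiv.sigmaFiberEquiv f).symm a))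
  have hprop : ∀ a, g (ι a) = f a := by
    intro a
    have h1 : (Equiv.sigmaFiberEquiv f).symm a = ⟨f a, a, rfl⟩ := rfl
    simp only [ι, h1]
    have h2 : E ⟨f a, a, rfl⟩ = ⟨f a, emb (f a) ⟨a, rfl⟩⟩ := rfl
    rw [h2]
    exact (emb (f a) ⟨a, rfl⟩).2
  refine ⟨ι, ?_, hprop⟩
  intro a a' h
  have : E ((Equiv.sigmaFiberEquiv f).symm a) = E ((Equiv.sigmaFiberEquiv f).symm a') :=
    (Equiv.sigmaFiberEquiv g).injective h
  have := E.injective this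
  exact (Equiv.sigmaFiberEquiv f).symm.injective.eq_iff.mp (by rw [this])


set_option maxHeartbeats 1000000 in
set_option synthInstance.maxHeartbeats 200000 in
open Matrix Finset Module Projectivization in
/-- if `S` has size `(q^k - 1)/(q - 1)` and split difference
`δ_q(S) > -q^(k-1)`, then `S` is q-projection-forcing. -/
theorem stmt_3 (q k : ℕ) (hq : IsPrimePow q) (hk : 0 < k) (S : Multiset ℤ)
    (hcard : Multiset.card S = (q ^ k - 1) / (q - 1))
    (hδ : splitDiff q k S > -(q : ℤ) ^ (k - 1)) :
    ProjectionForcing q S := by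
  intro F _inst1 _inst2 _inst3 hF n m U V φ hφ
  classical
  have hq2 : 2 ≤ q := hq.two_le
  haveI : Nonempty (Fin k) := ⟨⟨0, hk⟩⟩
  haveI : Nontrivial (Fin k → F) := Function.nontrivial
  have hqF2 : 2 ≤ Fintype.card F := Fintype.one_lt_card
  -- card S = card P(U)
  have hS1 : Multiset.card S = Fintype.card (Projectivization F ↥U) := by
    rw [← hφ]
    simp [projWeightChanges]
  have hSpos : 0 < Multiset.card S := by
    rw [hcard]
    have h1 : q ≤ q ^ k := Nat.le_self_pow hk.ne' q
    exact Nat.div_pos (by omega) (by omega)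
  haveI hnePU : Nonempty (Projectivization F ↥U) := by
    rw [hS1] at hSpos; exact Fintype.card_pos_iff.mp hSpos
  obtain ⟨p₀⟩ := hnePU
  haveI : Nontrivial ↥U := nontrivial_of_ne p₀.rep 0 p₀.rep_nonzero
  -- dimension of U is k
  have hPU := card_proj_mul (F := F) (W := ↥U)
  have hcardU : Fintype.card ↥U = Fintype.card F ^ (Module.finrank F ↥U) :=
    card_eq_pow_finrank (K := F)
  have hdvd : (q - 1) ∣ (q ^ k - 1) := by
    simpa using Nat.sub_dvd_pow_sub_pow q 1 k
  have hposd : 1 ≤ q ^ Module.finrank F ↥U := Nat.one_le_pow _ _ (by omega)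
  have hposk : 1 ≤ q ^ k := Nat.one_le_pow _ _ (by omega)
  have hd : Module.finrank F ↥U = k := by
    rw [hcardU, hF] at hPU
    have hPcard : Fintype.card (Projectivization F ↥U) = (q ^ k - 1) / (q - 1) := by
      rw [← hS1, hcard]
    rw [hPcard, Nat.div_mul_cancel hdvd] at hPU
    have heq : q ^ Module.finrank F ↥U = q ^ k := by omega
    exact Nat.pow_right_injective hq2 heq
  -- basis of U indexed by Fin k
  let b : Basis (Fin k) F ↥U := Module.finBasisOfFinrankEq F ↥U hd
  let E : (Fin k → F) ≃ₗ[F] ↥U := b.equivFun.symm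
  let gv : Fin n → (Fin k → F) := fun j t => ((b t : ↥U) : Fin n → F) j
  let hv : Fin m → (Fin k → F) := fun i t => ((φ (b t) : ↥V) : Fin m → F) i
  have key1 : ∀ (z : Fin k → F) (j : Fin n), ((E z : ↥U) : Fin n → F) j = z ⬝ᵥ gv j := by
    intro z j
    have h1 : E z = ∑ t, z t • b t := b.equivFun_symm_apply z
    rw [h1]
    have h2 : ((∑ t, z t • b t : ↥U) : Fin n → F) = ∑ t, z t • ((b t : ↥U) : Fin n → F) := by
      rw [Submodule.coe_sum]
      simp
    rw [h2]
    simp [dotProduct, gv, Finset.sum_apply]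
  have key2 : ∀ (z : Fin k → F) (i : Fin m),
      ((φ (E z) : ↥V) : Fin m → F) i = z ⬝ᵥ hv i := by
    intro z i
    have h1 : E z = ∑ t, z t • b t := b.equivFun_symm_apply z
    rw [h1, map_sum]
    have h2 : ((∑ t, φ (z t • b t) : ↥V) : Fin m → F)
        = ∑ t, z t • ((φ (b t) : ↥V) : Fin m → F) := by
      rw [Submodule.coe_sum]
      simp
    rw [h2]
    simp [dotProduct, hv, Finset.sum_apply]
  -- generic fiberwise counting
  have main_count : ∀ {N : ℕ} (G : Fin N → (Fin k → F))
      (Gbar : Fin N → Projectivization F (Fin k → F)),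
      (∀ (j : Fin N) (hj : G j ≠ 0), Gbar j = Projectivization.mk F (G j) hj) →
      ∀ (z : Fin k → F),
      (univ.filter (fun j => z ⬝ᵥ G j ≠ 0)).card
        = ∑ v ∈ univ.filter (fun v : Projectivization F (Fin k → F) => v.rep ⬝ᵥ z ≠ 0),
            (univ.filter (fun j => G j ≠ 0 ∧ Gbar j = v)).card := by
    intro N G Gbar hGbar z
    have hiff : ∀ (j : Fin N) (hj : G j ≠ 0),
        (z ⬝ᵥ G j ≠ 0 ↔ (Gbar j).rep ⬝ᵥ z ≠ 0) := by
      intro j hj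
      obtain ⟨a, ha⟩ := Projectivization.exists_smul_eq_mk_rep F (G j) hj
      rw [hGbar j hj, ← ha, Units.smul_def, smul_dotProduct, smul_eq_mul, dotProduct_comm]
      simp [Units.ne_zero]
    have hmem : ∀ j ∈ univ.filter (fun j => z ⬝ᵥ G j ≠ 0),
        Gbar j ∈ univ.filter
          (fun v : Projectivization F (Fin k → F) => v.rep ⬝ᵥ z ≠ 0) := by
      intro j hj
      rw [mem_filter] at hj ⊢
      have hj0 : G j ≠ 0 := fun h => hj.2 (by simp [h])
      exact ⟨mem_univ _, (hiff j hj0).mp hj.2⟩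
    rw [Finset.card_eq_sum_card_fiberwise hmem]
    apply Finset.sum_congr rfl
    intro v hvv
    rw [mem_filter] at hvv
    congr 1
    rw [Finset.filter_filter]
    apply Finset.filter_congr
    intro j _
    constructor
    · rintro ⟨h1, h2⟩
      exact ⟨fun h => h1 (by simp [h]), h2⟩
    · rintro ⟨h1, h2⟩
      exact ⟨(hiff j h1).mpr (h2 ▸ hvv.2), h2⟩
  -- projective multiplicities of columns
  haveI hnePk : Nonempty (Projectivization F (Fin k → F)) := by
    obtain ⟨y, hy⟩ := exists_ne (0 : Fin k → F)
    exact ⟨Projectivization.mk F y hy⟩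
  let gbar : Fin n → Projectivization F (Fin k → F) := fun j =>
    if hgj : gv j ≠ 0 then Projectivization.mk F (gv j) hgj else Classical.arbitrary _
  let hbar : Fin m → Projectivization F (Fin k → F) := fun i =>
    if hhi : hv i ≠ 0 then Projectivization.mk F (hv i) hhi else Classical.arbitrary _
  have hgbar : ∀ (j : Fin n) (hj : gv j ≠ 0), gbar j = Projectivization.mk F (gv j) hj := by
    intro j hj; simp [gbar, hj]
  have hhbar : ∀ (i : Fin m) (hi : hv i ≠ 0), hbar i = Projectivization.mk F (hv i) hi := by
    intro i hi; simp [hbar, hi]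
  let c1 : Projectivization F (Fin k → F) → ℕ := fun v =>
    (univ.filter (fun j : Fin n => gv j ≠ 0 ∧ gbar j = v)).card
  let c2 : Projectivization F (Fin k → F) → ℕ := fun v =>
    (univ.filter (fun i : Fin m => hv i ≠ 0 ∧ hbar i = v)).card
  let xv : Projectivization F (Fin k → F) → ℤ := fun v => (c1 v : ℤ) - c2 v
  -- the weight-change function on projective space
  let s : Projectivization F (Fin k → F) → ℤ := fun p =>
    ((univ.filter (fun j : Fin n => p.rep ⬝ᵥ gv j ≠ 0)).card : ℤ)
      - (univ.filter (fun i : Fin m => p.rep ⬝ᵥ hv i ≠ 0)).card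
  have hsum_s : ∀ p : Projectivization F (Fin k → F),
      s p = ∑ v ∈ univ.filter
          (fun v : Projectivization F (Fin k → F) => v.rep ⬝ᵥ p.rep ≠ 0), xv v := by
    intro p
    show ((univ.filter (fun j : Fin n => p.rep ⬝ᵥ gv j ≠ 0)).card : ℤ)
      - (univ.filter (fun i : Fin m => p.rep ⬝ᵥ hv i ≠ 0)).card = _
    rw [main_count gv gbar hgbar p.rep, main_count hv hbar hhbar p.rep]
    push_cast
    rw [Finset.sum_sub_distrib]
  -- S is the multiset of s over projective space
  have hEne : ∀ y : Fin k → F, y ≠ 0 → (E y : ↥U) ≠ 0 := fun y hy h =>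
    hy ((LinearEquiv.map_eq_zero_iff E).mp h)
  let f : Projectivization F (Fin k → F) → Projectivization F ↥U := fun p =>
    Projectivization.mk F (E p.rep) (hEne _ p.rep_nonzero)
  have hf_rep : ∀ p, ∃ a : Fˣ, (f p).rep = E ((a : F) • p.rep) := by
    intro p
    obtain ⟨a, ha⟩ := Projectivization.exists_smul_eq_mk_rep F (E p.rep) (hEne _ p.rep_nonzero)
    exact ⟨a, by rw [← ha, Units.smul_def, _root_.map_smul]⟩
  have hfinj : Function.Injective f := by
    intro p p' hpp
    obtain ⟨a, ha⟩ := (Projectivization.mk_eq_mk_iff' F _ _ (hEne _ p.rep_nonzero)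
      (hEne _ p'.rep_nonzero)).mp hpp
    rw [← _root_.map_smul] at ha
    have h2 : a • p'.rep = p.rep := E.injective ha
    have h3 : Projectivization.mk F p.rep p.rep_nonzero
        = Projectivization.mk F p'.rep p'.rep_nonzero :=
      (Projectivization.mk_eq_mk_iff' F _ _ _ _).mpr ⟨a, h2⟩
    rwa [Projectivization.mk_rep, Projectivization.mk_rep] at h3
  have hfsurj : Function.Surjective f := by
    intro pu
    have hz : (E.symm pu.rep : Fin k → F) ≠ 0 := fun h =>
      pu.rep_nonzero ((LinearEquiv.map_eq_zero_iff E.symm).mp h)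
    refine ⟨Projectivization.mk F (E.symm pu.rep) hz, ?_⟩
    obtain ⟨a, ha⟩ := Projectivization.exists_smul_eq_mk_rep F (E.symm pu.rep) hz
    have h4 : (E ((Projectivization.mk F (E.symm pu.rep) hz).rep) : ↥U)
        = (a : F) • pu.rep := by
      rw [← ha, Units.smul_def, _root_.map_smul, LinearEquiv.apply_symm_apply]
    have ha0 : (a : F) ≠ 0 := Units.ne_zero a
    have h5 : ((a : F) • pu.rep : ↥U) ≠ 0 := smul_ne_zero ha0 pu.rep_nonzero
    show Projectivization.mk F _ _ = pu
    have h6 : Projectivization.mk F (E ((Projectivization.mk F (E.symm pu.rep) hz).rep))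
        (hEne _ (Projectivization.mk F (E.symm pu.rep) hz).rep_nonzero)
        = Projectivization.mk F pu.rep pu.rep_nonzero := by
      apply (Projectivization.mk_eq_mk_iff' F _ _ _ pu.rep_nonzero).mpr
      exact ⟨(a : F), h4.symm⟩
    rw [h6, Projectivization.mk_rep]
  have huniv : (univ : Finset (Projectivization F ↥U)).val
      = ((univ : Finset (Projectivization F (Fin k → F))).val).map f := by
    have := Finset.map_univ_equiv (Equiv.ofBijective f ⟨hfinj, hfsurj⟩)
    rw [← this]
    rfl
  have hWs : ∀ p : Projectivization F (Fin k → F),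
      (hammingNorm ((f p).rep : Fin n → F) : ℤ)
        - (hammingNorm ((φ (f p).rep : ↥V) : Fin m → F) : ℤ) = s p := by
    intro p
    obtain ⟨a, ha⟩ := hf_rep p
    have hn1 : hammingNorm ((f p).rep : Fin n → F)
        = (univ.filter (fun j : Fin n => p.rep ⬝ᵥ gv j ≠ 0)).card := by
      unfold hammingNorm
      congr 1
      apply Finset.filter_congr
      intro j _
      rw [ha, key1, smul_dotProduct, smul_eq_mul]
      simp [Units.ne_zero a]
    have hn2 : hammingNorm ((φ (f p).rep : ↥V) : Fin m → F)
        = (univ.filter (fun i : Fin m => p.rep ⬝ᵥ hv i ≠ 0)).card := by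
      unfold hammingNorm
      congr 1
      apply Finset.filter_congr
      intro i _
      rw [ha, key2, smul_dotProduct, smul_eq_mul]
      simp [Units.ne_zero a]
    rw [hn1, hn2]
  have hSmap : S = ((univ : Finset (Projectivization F (Fin k → F))).val).map s := by
    rw [← hφ]
    unfold projWeightChanges
    rw [huniv, Multiset.map_map]
    exact Multiset.map_congr rfl (fun p _ => hWs p)
  -- summing s over arbitrary finsets of points
  have hsum_univ : ∀ (A : Finset (Projectivization F (Fin k → F))),
      ∑ p ∈ A, s p = ∑ v : Projectivization F (Fin k → F),
        ((A.filter (fun p => v.rep ⬝ᵥ p.rep ≠ 0)).card : ℤ) * xv v := by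
    intro A
    calc ∑ p ∈ A, s p
        = ∑ p ∈ A, ∑ v ∈ univ.filter
            (fun v : Projectivization F (Fin k → F) => v.rep ⬝ᵥ p.rep ≠ 0), xv v :=
          Finset.sum_congr rfl (fun p _ => hsum_s p)
      _ = ∑ p ∈ A, ∑ v : Projectivization F (Fin k → F),
            if v.rep ⬝ᵥ p.rep ≠ 0 then xv v else 0 := by
          refine Finset.sum_congr rfl fun p _ => ?_
          rw [Finset.sum_filter]
      _ = ∑ v : Projectivization F (Fin k → F), ∑ p ∈ A,
            if v.rep ⬝ᵥ p.rep ≠ 0 then xv v else 0 := Finset.sum_comm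
      _ = ∑ v : Projectivization F (Fin k → F),
            ((A.filter (fun p => v.rep ⬝ᵥ p.rep ≠ 0)).card : ℤ) * xv v := by
          refine Finset.sum_congr rfl fun v _ => ?_
          rw [← Finset.sum_filter, Finset.sum_const, nsmul_eq_mul]
  have hprop_ne : ∀ v₀ v : Projectivization F (Fin k → F), v ≠ v₀ →
      ¬ ∃ c : F, v.rep = c • v₀.rep := by
    rintro v₀ v hne ⟨c, hc⟩
    apply hne
    have h3 : Projectivization.mk F v.rep v.rep_nonzero
        = Projectivization.mk F v₀.rep v₀.rep_nonzero :=
      (Projectivization.mk_eq_mk_iff' F _ _ _ _).mpr ⟨c, hc.symm⟩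
    rwa [Projectivization.mk_rep, Projectivization.mk_rep] at h3
  have htot : ∑ p : Projectivization F (Fin k → F), s p
      = ((Fintype.card F ^ (k - 1) : ℕ) : ℤ) * ∑ v : Projectivization F (Fin k → F), xv v := by
    rw [hsum_univ univ, Finset.mul_sum]
    refine Finset.sum_congr rfl fun v _ => ?_
    rw [card_proj_dot_ne hk v.rep v.rep_nonzero]
  have hAsum : ∀ v₀ : Projectivization F (Fin k → F),
      ∑ p ∈ univ.filter (fun p : Projectivization F (Fin k → F) =>
          v₀.rep ⬝ᵥ p.rep ≠ 0), s p
        = ((Fintype.card F ^ (k - 1) : ℕ) : ℤ) * xv v₀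
          + ((Fintype.card F ^ (k - 2) * (Fintype.card F - 1) : ℕ) : ℤ)
            * ∑ v ∈ univ.erase v₀, xv v := by
    intro v₀
    rw [hsum_univ, ← Finset.add_sum_erase _ _ (mem_univ v₀)]
    congr 1
    · rw [Finset.filter_filter]
      have heq : (univ.filter (fun p : Projectivization F (Fin k → F) =>
          v₀.rep ⬝ᵥ p.rep ≠ 0 ∧ v₀.rep ⬝ᵥ p.rep ≠ 0))
          = univ.filter (fun p => v₀.rep ⬝ᵥ p.rep ≠ 0) := by
        apply Finset.filter_congr
        intro p _
        exact and_self_iff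
      rw [heq, card_proj_dot_ne hk v₀.rep v₀.rep_nonzero]
    · rw [Finset.mul_sum]
      refine Finset.sum_congr rfl fun v hvv => ?_
      rw [Finset.filter_filter,
        card_proj_dot_pair_ne v₀.rep v.rep v₀.rep_nonzero v.rep_nonzero
          (hprop_ne v₀ v (Finset.mem_erase.mp hvv).1)]
  -- split difference formula
  have hsortsum : (S.sort (· ≤ ·)).sum = S.sum := by
    have h1 := Multiset.sort_eq S (· ≤ ·)
    calc (S.sort (· ≤ ·)).sum
        = ((S.sort (· ≤ ·) : List ℤ) : Multiset ℤ).sum := (Multiset.sum_coe _).symm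
      _ = S.sum := by rw [h1]
  have htakedrop : ((S.sort (· ≤ ·)).take (q ^ (k - 1))).sum
      + ((S.sort (· ≤ ·)).drop (q ^ (k - 1))).sum = S.sum := by
    rw [← hsortsum, ← List.sum_append, List.take_append_drop]
  have hsplitDiff : splitDiff q k S
      = q * ((S.sort (· ≤ ·)).take (q ^ (k - 1))).sum - ((q : ℤ) - 1) * S.sum := by
    unfold splitDiff
    linear_combination (1 - (q : ℤ)) * htakedrop
  -- all multiplicities change nonnegatively
  have hqpos : (0 : ℤ) < (q : ℤ) := by exact_mod_cast (by omega : 0 < q)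
  have hxnn : ∀ v, 0 ≤ xv v := by
    by_contra hcon
    push_neg at hcon
    obtain ⟨v₀, hv₀⟩ := hcon
    set A := univ.filter (fun p : Projectivization F (Fin k → F) =>
      v₀.rep ⬝ᵥ p.rep ≠ 0) with hA'
    have hAcard : A.card = q ^ (k - 1) := by
      rw [hA', card_proj_dot_ne hk v₀.rep v₀.rep_nonzero, hF]
    set T := A.val.map s with hT
    have hTle : T ≤ S := by
      rw [hSmap, hT]
      exact Multiset.map_le_map (Finset.val_le_iff.mpr (Finset.subset_univ A))
    have hTcard : Multiset.card T = q ^ (k - 1) := by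
      rw [hT, Multiset.card_map]
      exact hAcard
    have htk : ((S.sort (· ≤ ·)).take (q ^ (k - 1))).sum ≤ T.sum := by
      have h2 := sorted_take_sum_le (S.sort (· ≤ ·)) (Multiset.pairwise_sort _ _) T
        (by rw [Multiset.sort_eq]; exact hTle)
      rwa [hTcard] at h2
    have hTsum : T.sum = ∑ p ∈ A, s p := rfl
    have hSsum : S.sum = ∑ p : Projectivization F (Fin k → F), s p := by
      rw [hSmap]
      rfl
    have hxsplit : ∑ v : Projectivization F (Fin k → F), xv v
        = xv v₀ + ∑ v ∈ univ.erase v₀, xv v :=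
      (Finset.add_sum_erase _ _ (mem_univ v₀)).symm
    have hkey : (q : ℤ) * T.sum - ((q : ℤ) - 1) * S.sum = (q : ℤ) ^ (k - 1) * xv v₀ := by
      rw [hTsum, hSsum, hA', hAsum v₀, htot, hxsplit]
      have hc1 : ((Fintype.card F ^ (k - 1) : ℕ) : ℤ) = (q : ℤ) ^ (k - 1) := by
        rw [hF]; push_cast; ring
      have hc2 : ((Fintype.card F ^ (k - 2) * (Fintype.card F - 1) : ℕ) : ℤ)
          = (q : ℤ) ^ (k - 2) * ((q : ℤ) - 1) := by
        rw [hF]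
        push_cast [Nat.cast_sub (by omega : 1 ≤ q)]
        ring
      rw [hc1, hc2]
      rcases Nat.lt_or_ge k 2 with hk1 | hk2
      · -- k = 1 : the erased sum is empty
        have hkeq : k = 1 := by omega
        subst hkeq
        have hcardP : Fintype.card (Projectivization F (Fin 1 → F)) = 1 := by
          have h3 := card_proj_mul (F := F) (W := Fin 1 → F)
          rw [Fintype.card_fun, Fintype.card_fin, pow_one] at h3
          exact Nat.eq_of_mul_eq_mul_right (show 0 < Fintype.card F - 1 by omega)
            (h3.trans (one_mul _).symm)
        have hzero : univ.erase v₀ = ∅ := by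
          rw [← Finset.card_eq_zero, Finset.card_erase_of_mem (mem_univ _),
            Finset.card_univ, hcardP]
        rw [hzero, Finset.sum_empty]
        ring
      · have hpow : (q : ℤ) * (q : ℤ) ^ (k - 2) = (q : ℤ) ^ (k - 1) := by
          rw [← pow_succ']
          congr 1
          omega
        linear_combination (((q : ℤ) - 1) * (∑ v ∈ univ.erase v₀, xv v)) * hpow
    have hTsle : splitDiff q k S ≤ (q : ℤ) ^ (k - 1) * xv v₀ := by
      rw [hsplitDiff, ← hkey]
      nlinarith [htk]
    have hfinal : (q : ℤ) ^ (k - 1) * xv v₀ ≤ -(q : ℤ) ^ (k - 1) := by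
      have h1 : xv v₀ ≤ -1 := by omega
      nlinarith [pow_pos hqpos (k - 1)]
    linarith [hδ]
  -- multiplicity inequality
  have hc21 : ∀ v, (c2 v : ℤ) ≤ (c1 v : ℤ) := by
    intro v
    have := hxnn v
    simp only [xv] at this
    omega
  -- build the injection of coordinates
  have hfibcard : ∀ v : Projectivization F (Fin k → F),
      Fintype.card {z : {i : Fin m // hv i ≠ 0} // hbar z.val = v}
        ≤ Fintype.card {z : {j : Fin n // gv j ≠ 0} // gbar z.val = v} := by
    intro v
    have e1 : Fintype.card {z : {i : Fin m // hv i ≠ 0} // hbar z.val = v} = c2 v := by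
      have h4 : Fintype.card {z : {i : Fin m // hv i ≠ 0} // hbar z.val = v}
          = Fintype.card {i : Fin m // hv i ≠ 0 ∧ hbar i = v} :=
        Fintype.card_congr (Equiv.subtypeSubtypeEquivSubtypeInter
          (fun i : Fin m => hv i ≠ 0) (fun i => hbar i = v))
      rw [h4, Fintype.card_subtype]
    have e2 : Fintype.card {z : {j : Fin n // gv j ≠ 0} // gbar z.val = v} = c1 v := by
      have h4 : Fintype.card {z : {j : Fin n // gv j ≠ 0} // gbar z.val = v}
          = Fintype.card {j : Fin n // gv j ≠ 0 ∧ gbar j = v} :=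
        Fintype.card_congr (Equiv.subtypeSubtypeEquivSubtypeInter
          (fun j : Fin n => gv j ≠ 0) (fun j => gbar j = v))
      rw [h4, Fintype.card_subtype]
    rw [e1, e2]
    exact_mod_cast hc21 v
  obtain ⟨ι, hιinj, hιprop⟩ := exists_inj_of_fiber_card_le
    (fun z : {i : Fin m // hv i ≠ 0} => hbar z.val)
    (fun z : {j : Fin n // gv j ≠ 0} => gbar z.val) hfibcard
  have hscal : ∀ (i : Fin m) (hi : hv i ≠ 0), ∃ a : F, a • gv (ι ⟨i, hi⟩).val = hv i := by
    intro i hi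
    have h1 : gbar (ι ⟨i, hi⟩).val = hbar i := hιprop ⟨i, hi⟩
    rw [hgbar _ (ι ⟨i, hi⟩).2, hhbar i hi] at h1
    exact (Projectivization.mk_eq_mk_iff' F _ _ hi (ι ⟨i, hi⟩).2).mp h1.symm
  choose scal hscalspec using hscal
  refine ⟨(fun i j => if hi : hv i ≠ 0 then
      (if j = (ι ⟨i, hi⟩).val then scal i hi else 0) else 0 : Matrix (Fin m) (Fin n) F),
    ?_, ?_, ?_⟩
  · -- φ is given by the matrix
    intro u
    funext i
    have hu : E (b.equivFun u) = u := b.equivFun.symm_apply_apply u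
    have hL : ((φ u : ↥V) : Fin m → F) i = (b.equivFun u) ⬝ᵥ hv i := by
      conv_lhs => rw [← hu]
      exact key2 _ i
    have hR : ∀ j, ((u : ↥U) : Fin n → F) j = (b.equivFun u) ⬝ᵥ gv j := by
      intro j
      conv_lhs => rw [← hu]
      exact key1 _ j
    rw [hL]
    show _ = ∑ j, (if hi : hv i ≠ 0 then
      (if j = (ι ⟨i, hi⟩).val then scal i hi else 0) else 0) * ((u : Fin n → F)) j
    by_cases hi : hv i ≠ 0
    · have hterm : ∀ j, (if hi' : hv i ≠ 0 then
          (if j = (ι ⟨i, hi'⟩).val then scal i hi' else 0) else 0) * ((u : Fin n → F)) j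
          = if j = (ι ⟨i, hi⟩).val then scal i hi * ((b.equivFun u) ⬝ᵥ gv j) else 0 := by
        intro j
        rw [dif_pos hi, hR j]
        split <;> simp
      rw [Finset.sum_congr rfl (fun j _ => hterm j), Finset.sum_ite_eq' univ _
        (fun j => scal i hi * ((b.equivFun u) ⬝ᵥ gv j))]
      simp only [mem_univ, if_true]
      rw [← hscalspec i hi, dotProduct_smul, smul_eq_mul]
    · push_neg at hi
      have hL0 : (b.equivFun u) ⬝ᵥ hv i = 0 := by rw [hi, dotProduct_zero]
      rw [hL0]
      symm
      apply Finset.sum_eq_zero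
      intro j _
      rw [dif_neg (not_not.mpr hi), zero_mul]
  · -- at most one nonzero entry in each row
    intro i j j' h1' h2'
    have h1 : (if hi : hv i ≠ 0 then
        (if j = (ι ⟨i, hi⟩).val then scal i hi else 0) else 0) ≠ 0 := h1'
    have h2 : (if hi : hv i ≠ 0 then
        (if j' = (ι ⟨i, hi⟩).val then scal i hi else 0) else 0) ≠ 0 := h2'
    by_cases hi : hv i ≠ 0
    · rw [dif_pos hi] at h1 h2
      have hj1 : j = (ι ⟨i, hi⟩).val := by
        by_contra hh
        rw [if_neg hh] at h1
        exact h1 rfl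
      have hj2 : j' = (ι ⟨i, hi⟩).val := by
        by_contra hh
        rw [if_neg hh] at h2
        exact h2 rfl
      rw [hj1, hj2]
    · rw [dif_neg hi] at h1
      exact absurd rfl h1
  · -- at most one nonzero entry in each column
    intro i i' j h1' h2'
    have h1 : (if hi : hv i ≠ 0 then
        (if j = (ι ⟨i, hi⟩).val then scal i hi else 0) else 0) ≠ 0 := h1'
    have h2 : (if hi' : hv i' ≠ 0 then
        (if j = (ι ⟨i', hi'⟩).val then scal i' hi' else 0) else 0) ≠ 0 := h2'
    by_cases hi : hv i ≠ 0
    · by_cases hi' : hv i' ≠ 0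
      · rw [dif_pos hi] at h1
        rw [dif_pos hi'] at h2
        have hj1 : j = (ι ⟨i, hi⟩).val := by
          by_contra hh
          rw [if_neg hh] at h1
          exact h1 rfl
        have hj2 : j = (ι ⟨i', hi'⟩).val := by
          by_contra hh
          rw [if_neg hh] at h2
          exact h2 rfl
        have hval : (ι ⟨i, hi⟩ : {j : Fin n // gv j ≠ 0}) = ι ⟨i', hi'⟩ :=
          Subtype.ext (hj1 ▸ hj2)
        have := hιinj hval
        exact congrArg Subtype.val this
      · rw [dif_neg hi'] at h2
        exact absurd rfl h2
    · rw [dif_neg hi] at h1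
      exact absurd rfl h1
end Aux
end

section
/- Let k be a positive integer and q a prime power. The matrix M_{k,q} is invertible over the reals, and its inverse is (1/q^{k−1})(q · M_{k,q}^T − (q−1) J), where J is the all-ones matrix and M_{k,q}^T is the transpose of M_{k,q}. -/
open Matrix

section Helpers

open Finset

/-- Sums of `g ∘ ψ` for a surjective additive hom `ψ`. -/
private lemma sum_comp_hom {V β : Type*} [AddCommGroup V] [AddCommGroup β]
    [Fintype V] [Fintype β] [DecidableEq β]
    (ψ : V →+ β) (hs : Function.Surjective ψ) (g : β → ℝ) :
    (Fintype.card β : ℝ) * ∑ x : V, g (ψ x) = (Fintype.card V : ℝ) * ∑ b : β, g b := by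
  classical
  have hfib : ∀ b : β, ((univ : Finset V).filter fun x => ψ x = b).card
      = ((univ : Finset V).filter fun x => ψ x = 0).card := by
    intro b
    obtain ⟨x0, hx0⟩ := hs b
    refine Finset.card_nbij' (fun x => x - x0) (fun x => x + x0) ?_ ?_ ?_ ?_
    · intro a ha
      simp only [Finset.mem_coe, mem_filter, mem_univ, true_and] at ha ⊢
      simp [map_sub, ha, hx0]
    · intro a ha
      simp only [Finset.mem_coe, mem_filter, mem_univ, true_and] at ha ⊢
      simp [map_add, ha, hx0]
    · intro a _; simp
    · intro a _; simp
  set c := ((univ : Finset V).filter fun x => ψ x = 0).card with hc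
  have key : ∀ g : β → ℝ, ∑ x : V, g (ψ x) = (c : ℝ) * ∑ b : β, g b := by
    intro g
    rw [← Finset.sum_fiberwise' (univ : Finset V) ψ g, Finset.mul_sum]
    refine Finset.sum_congr rfl fun b _ => ?_
    rw [Finset.sum_const, hfib b, nsmul_eq_mul]
  have hcard : (Fintype.card V : ℝ) = (c : ℝ) * (Fintype.card β : ℝ) := by
    have h1 := key (fun _ => (1 : ℝ))
    simpa [mul_comm] using h1
  rw [key g, hcard]; ring

/-- Sum over a vector space of a scale-invariant function vanishing at 0,
in terms of the sum over the projectivization. -/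
private lemma sum_proj {F : Type} [Field F] [Fintype F] [DecidableEq F] {k : ℕ}
    (g : (Fin k → F) → ℝ) (hg0 : g 0 = 0)
    (hg : ∀ (c : F) (x : Fin k → F), c ≠ 0 → g (c • x) = g x) :
    ∑ x : Fin k → F, g x
      = (Fintype.card Fˣ : ℝ) * ∑ u : Projectivization F (Fin k → F), g u.rep := by
  classical
  have h1 : ∑ x ∈ (univ : Finset (Fin k → F)).filter (fun x => x ≠ 0), g x
      = ∑ x : Fin k → F, g x := by
    refine Finset.sum_filter_of_ne fun x _ hx => ?_
    intro h0; rw [h0] at hx; exact hx hg0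
  have h2 : ∑ x ∈ (univ : Finset (Fin k → F)).filter (fun x => x ≠ 0), g x
      = ∑ x : {x : Fin k → F // x ≠ 0}, g ↑x :=
    Finset.sum_subtype _ (by simp) g
  rw [← h1, h2]
  rw [← Finset.sum_fiberwise (univ : Finset {x : Fin k → F // x ≠ 0})
      (Projectivization.mk' F) (fun x => g ↑x)]
  rw [Finset.mul_sum]
  refine Finset.sum_congr rfl fun u _ => ?_
  have hconst : ∀ x ∈ (univ : Finset {x : Fin k → F // x ≠ 0}).filter
      (fun x => Projectivization.mk' F x = u), g ↑x = g u.rep := by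
    intro x hx
    rw [mem_filter] at hx
    have hmk : Projectivization.mk F ↑x x.2 = Projectivization.mk F u.rep u.rep_nonzero := by
      rw [← Projectivization.mk'_eq_mk, hx.2, Projectivization.mk_rep]
    obtain ⟨a, ha⟩ := (Projectivization.mk_eq_mk_iff F _ _ x.2 u.rep_nonzero).1 hmk
    rw [← ha]
    exact hg _ _ (Units.ne_zero a)
  rw [Finset.sum_congr rfl hconst, Finset.sum_const, nsmul_eq_mul]
  congr 1
  norm_cast
  refine (Finset.card_bij (fun (a : Fˣ) _ =>
      (⟨(a : F) • u.rep, smul_ne_zero (Units.ne_zero a) u.rep_nonzero⟩ :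
        {x : Fin k → F // x ≠ 0})) ?_ ?_ ?_).symm
  · intro a _
    simp only [Finset.mem_coe, Set.mem_setOf_eq, mem_filter, mem_univ, true_and, Projectivization.mk'_eq_mk]
    refine Finset.mem_filter.2 ⟨Finset.mem_univ _, ?_⟩
    show Projectivization.mk F ((a : F) • u.rep) _ = u
    conv_rhs => rw [← Projectivization.mk_rep u]
    exact (Projectivization.mk_eq_mk_iff F _ _ _ u.rep_nonzero).2 ⟨a, rfl⟩
  · intro a _ b _ hab
    have : (a : F) • u.rep = (b : F) • u.rep := congrArg Subtype.val hab
    have := smul_left_injective F u.rep_nonzero this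
    exact Units.ext this
  · intro x hx
    rw [mem_filter] at hx
    have hmk : Projectivization.mk F ↑x x.2 = Projectivization.mk F u.rep u.rep_nonzero := by
      rw [← Projectivization.mk'_eq_mk, hx.2, Projectivization.mk_rep]
    obtain ⟨a, ha⟩ := (Projectivization.mk_eq_mk_iff F _ _ x.2 u.rep_nonzero).1 hmk
    exact ⟨a, Finset.mem_univ _, Subtype.ext ha⟩

/-- The joint dot-product map for a "projectively distinct" pair is surjective. -/
private lemma pair_surj {F : Type} [Field F] {k : ℕ} (a b : Fin k → F) (ha : a ≠ 0)
    (hnp : ∀ c : F, b ≠ c • a) :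
    Function.Surjective (fun x : Fin k → F => ((a ⬝ᵥ x : F), (b ⬝ᵥ x : F))) := by
  obtain ⟨i, hi⟩ : ∃ i, a i ≠ 0 := by
    by_contra h; push_neg at h; exact ha (funext fun i => h i)
  set x1 : Fin k → F := (a i)⁻¹ • (Pi.single i 1 : Fin k → F) with hx1
  have hax1 : a ⬝ᵥ x1 = 1 := by
    rw [hx1, dotProduct_smul, dotProduct_single, smul_eq_mul]
    field_simp
  by_cases hu : ∃ u, a ⬝ᵥ u = 0 ∧ b ⬝ᵥ u ≠ 0
  · obtain ⟨u, hau, hbu⟩ := hu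
    rintro ⟨s, t⟩
    refine ⟨s • x1 + ((t - s * (b ⬝ᵥ x1)) * (b ⬝ᵥ u)⁻¹) • u, ?_⟩
    show (a ⬝ᵥ _, b ⬝ᵥ _) = (s, t)
    simp only [dotProduct_add, dotProduct_smul, hax1, hau, smul_eq_mul, Prod.mk.injEq,
      mul_one, mul_zero, add_zero]
    refine ⟨trivial, ?_⟩
    rw [mul_assoc, inv_mul_cancel₀ hbu, mul_one]
    ring
  · push_neg at hu
    exfalso
    apply hnp (b ⬝ᵥ x1)
    funext j
    have h0 : a ⬝ᵥ ((Pi.single j 1 : Fin k → F) - (a j) • x1) = 0 := by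
      rw [dotProduct_sub, dotProduct_smul, dotProduct_single, hax1, smul_eq_mul]
      ring
    have hb0 := hu _ h0
    rw [dotProduct_sub, dotProduct_smul, dotProduct_single, smul_eq_mul, sub_eq_zero,
      mul_one] at hb0
    simp only [Pi.smul_apply, smul_eq_mul]
    rw [hb0]; ring

/-- The single dot-product map for a nonzero vector is surjective. -/
private lemma single_surj {F : Type} [Field F] {k : ℕ} (a : Fin k → F) (ha : a ≠ 0) :
    Function.Surjective (fun x : Fin k → F => (a ⬝ᵥ x : F)) := by
  obtain ⟨i, hi⟩ : ∃ i, a i ≠ 0 := by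
    by_contra h; push_neg at h; exact ha (funext fun i => h i)
  intro t
  refine ⟨(t * (a i)⁻¹) • (Pi.single i 1 : Fin k → F), ?_⟩
  show a ⬝ᵥ _ = t
  rw [dotProduct_smul, dotProduct_single, smul_eq_mul]
  field_simp

end Helpers

/-- `M_{k,q}` is invertible over ℝ, with inverse
`(1/q^(k-1)) (q M_{k,q}ᵀ - (q-1) J)`, `J` the all-ones matrix. -/
theorem stmt_4 (q k : ℕ) (hq : IsPrimePow q) (hk : 0 < k)
    (F : Type) [Field F] [Fintype F] [DecidableEq F] (hF : Fintype.card F = q) :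
    IsUnit (Mkq F k) ∧
      (Mkq F k)⁻¹ = ((1 : ℝ) / (q : ℝ) ^ (k - 1)) •
        ((q : ℝ) • (Mkq F k)ᵀ - ((q : ℝ) - 1) • (Matrix.of fun _ _ => (1 : ℝ))) := by
  classical
  have hq2 : 2 ≤ q := hq.two_le
  have hq0 : (q : ℝ) ≠ 0 := by positivity
  have hq1 : (q : ℝ) - 1 ≠ 0 := by
    have : (2 : ℝ) ≤ (q : ℝ) := by exact_mod_cast hq2
    intro h; nlinarith
  have hcardF : (Fintype.card F : ℝ) = (q : ℝ) := by exact_mod_cast hF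
  have hcardU : (Fintype.card Fˣ : ℝ) = (q : ℝ) - 1 := by
    rw [Fintype.card_units, hF, Nat.cast_sub (by omega : 1 ≤ q), Nat.cast_one]
  have hcardV : (Fintype.card (Fin k → F) : ℝ) = (q : ℝ) ^ k := by
    rw [Fintype.card_fun, hF, Fintype.card_fin]; push_cast; rfl
  have hqk : (q : ℝ) ^ k = (q : ℝ) * (q : ℝ) ^ (k - 1) := by
    rw [← pow_succ']; congr 1; omega
  -- sum of the indicator over F
  have hind : ∑ t : F, (if t = 0 then (0 : ℝ) else 1) = (q : ℝ) - 1 := by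
    have h3 : ∀ t : F, (if t = 0 then (0 : ℝ) else 1) = 1 - (if t = 0 then 1 else 0) := by
      intro t; split <;> ring
    rw [Finset.sum_congr rfl (fun t _ => h3 t), Finset.sum_sub_distrib, Finset.sum_const,
      Finset.sum_ite_eq' Finset.univ (0 : F) (fun _ => (1 : ℝ))]
    simp [Finset.card_univ, hcardF]
  set N : Matrix (Projectivization F (Fin k → F)) (Projectivization F (Fin k → F)) ℝ :=
    (q : ℝ) • (Mkq F k)ᵀ - ((q : ℝ) - 1) • (Matrix.of fun _ _ => (1 : ℝ)) with hN
  have key : Mkq F k * N = ((q : ℝ) ^ (k - 1)) • 1 := by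
    ext v w
    have hrepv := v.rep_nonzero
    rw [Matrix.mul_apply]
    set G : (Fin k → F) → ℝ := fun x =>
      (if v.rep ⬝ᵥ x = 0 then (0 : ℝ) else 1) *
        ((q : ℝ) * (if w.rep ⬝ᵥ x = 0 then (0 : ℝ) else 1) - ((q : ℝ) - 1)) with hG
    have hsummand : ∀ u, Mkq F k v u * N u w = G u.rep := by
      intro u
      simp only [hN, hG, Mkq, Matrix.sub_apply, Matrix.smul_apply, Matrix.transpose_apply,
        Matrix.of_apply, smul_eq_mul, mul_one]
    rw [Finset.sum_congr rfl (fun u _ => hsummand u)]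
    have hG0 : G 0 = 0 := by simp [hG]
    have hGs : ∀ (c : F) (x : Fin k → F), c ≠ 0 → G (c • x) = G x := by
      intro c x hc
      simp only [hG, dotProduct_smul, smul_eq_mul, mul_eq_zero, hc, false_or]
    have hsum := sum_proj G hG0 hGs
    rw [hcardU] at hsum
    by_cases hvw : v = w
    · subst hvw
      set ψ : (Fin k → F) →+ F :=
        AddMonoidHom.mk' (fun x => v.rep ⬝ᵥ x) (fun x y => dotProduct_add v.rep x y) with hψ
      have hψs : Function.Surjective ψ := single_surj v.rep hrepv
      have h2 := sum_comp_hom ψ hψs (fun t =>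
        (if t = 0 then (0 : ℝ) else 1) *
          ((q : ℝ) * (if t = 0 then (0 : ℝ) else 1) - ((q : ℝ) - 1)))
      have hGψ : ∑ x : Fin k → F, (fun t =>
          (if t = 0 then (0 : ℝ) else 1) *
            ((q : ℝ) * (if t = 0 then (0 : ℝ) else 1) - ((q : ℝ) - 1))) (ψ x)
          = ∑ x : Fin k → F, G x := rfl
      have hsumt : ∑ t : F, (if t = 0 then (0 : ℝ) else 1) *
          ((q : ℝ) * (if t = 0 then (0 : ℝ) else 1) - ((q : ℝ) - 1)) = (q : ℝ) - 1 := by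
        have h4 : ∀ t : F, (if t = 0 then (0 : ℝ) else 1) *
            ((q : ℝ) * (if t = 0 then (0 : ℝ) else 1) - ((q : ℝ) - 1))
            = (if t = 0 then (0 : ℝ) else 1) := by
          intro t; split <;> ring
        rw [Finset.sum_congr rfl (fun t _ => h4 t), hind]
      rw [hGψ, hsumt, hcardF, hcardV, hsum, hqk] at h2
      -- h2 : q * ((q-1) * ∑ u, G u.rep) = q * q^(k-1) * (q - 1)
      have hS : ∑ u : Projectivization F (Fin k → F), G u.rep = (q : ℝ) ^ (k - 1) := by
        have h7 : (q : ℝ) * ((q - 1) * ∑ u : Projectivization F (Fin k → F), G u.rep)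
            = (q : ℝ) * ((q - 1) * (q : ℝ) ^ (k - 1)) := by rw [h2]; ring
        have h8 := mul_left_cancel₀ hq0 h7
        exact mul_left_cancel₀ hq1 h8
      rw [hS, Matrix.smul_apply, Matrix.one_apply_eq, smul_eq_mul, mul_one]
    · -- off-diagonal
      have hnp : ∀ c : F, w.rep ≠ c • v.rep := by
        intro c hc
        apply hvw
        have hc0 : c ≠ 0 := by
          rintro rfl; rw [zero_smul] at hc; exact w.rep_nonzero hc
        have : Projectivization.mk F w.rep w.rep_nonzero
            = Projectivization.mk F v.rep v.rep_nonzero :=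
          (Projectivization.mk_eq_mk_iff' F _ _ _ _).2 ⟨c, hc.symm⟩
        rw [Projectivization.mk_rep, Projectivization.mk_rep] at this
        exact this.symm
      set ψ : (Fin k → F) →+ F × F :=
        AddMonoidHom.mk' (fun x => ((v.rep ⬝ᵥ x : F), (w.rep ⬝ᵥ x : F)))
          (fun x y => by simp [dotProduct_add, Prod.ext_iff]) with hψ
      have hψs : Function.Surjective ψ := pair_surj v.rep w.rep hrepv hnp
      have h2 := sum_comp_hom ψ hψs (fun p =>
        (if p.1 = 0 then (0 : ℝ) else 1) *
          ((q : ℝ) * (if p.2 = 0 then (0 : ℝ) else 1) - ((q : ℝ) - 1)))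
      have hGψ : ∑ x : Fin k → F, (fun p : F × F =>
          (if p.1 = 0 then (0 : ℝ) else 1) *
            ((q : ℝ) * (if p.2 = 0 then (0 : ℝ) else 1) - ((q : ℝ) - 1))) (ψ x)
          = ∑ x : Fin k → F, G x := rfl
      have hsumt : ∑ p : F × F, (if p.1 = 0 then (0 : ℝ) else 1) *
          ((q : ℝ) * (if p.2 = 0 then (0 : ℝ) else 1) - ((q : ℝ) - 1)) = 0 := by
        rw [Fintype.sum_prod_type]
        have h5 : ∀ s : F, ∑ t : F, (if s = 0 then (0 : ℝ) else 1) *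
            ((q : ℝ) * (if t = 0 then (0 : ℝ) else 1) - ((q : ℝ) - 1)) = 0 := by
          intro s
          rw [← Finset.mul_sum]
          have h6 : ∑ t : F, ((q : ℝ) * (if t = 0 then (0 : ℝ) else 1) - ((q : ℝ) - 1)) = 0 := by
            rw [Finset.sum_sub_distrib, ← Finset.mul_sum, hind, Finset.sum_const,
              Finset.card_univ, nsmul_eq_mul, hcardF]
            ring
          rw [h6, mul_zero]
        rw [Finset.sum_congr rfl (fun s _ => h5 s), Finset.sum_const, smul_zero]
      rw [hGψ, hsumt, hsum, mul_zero] at h2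
      have hS : ∑ u : Projectivization F (Fin k → F), G u.rep = 0 := by
        have hc2 : (Fintype.card (F × F) : ℝ) ≠ 0 := by
          simp [Fintype.card_prod, hF]
          positivity
        have := mul_eq_zero.1 h2
        rcases this with h | h
        · exact absurd h hc2
        · rcases mul_eq_zero.1 h with h' | h'
          · exact absurd h' hq1
          · exact h'
      rw [hS, Matrix.smul_apply, Matrix.one_apply_ne hvw, smul_eq_mul, mul_zero]
  have hpow0 : ((q : ℝ)) ^ (k - 1) ≠ 0 := pow_ne_zero _ hq0
  have hMN : Mkq F k * (((1 : ℝ) / (q : ℝ) ^ (k - 1)) • N) = 1 := by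
    rw [Matrix.mul_smul, key, smul_smul, one_div, inv_mul_cancel₀ hpow0, one_smul]
  exact ⟨(Matrix.isUnit_iff_isUnit_det _).2 (Matrix.isUnit_det_of_right_inverse hMN), Matrix.inv_eq_right_inv hMN⟩
end

section
/- Let k be a positive integer and q a prime power. The real matrix M_{k,q} is invertible. -/
open Matrix

set_option linter.unusedSectionVars false

section Aux

variable {F : Type} [Field F] [Fintype F] [DecidableEq F] {k : ℕ}


variable {F : Type} [Field F] [Fintype F] [DecidableEq F] {k : ℕ}

def dotL (v : Fin k → F) : (Fin k → F) →ₗ[F] F where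
  toFun w := dotProduct v w
  map_add' w₁ w₂ := by simp [dotProduct, mul_add, Finset.sum_add_distrib]
  map_smul' c w := by simp [dotProduct, Finset.mul_sum, mul_left_comm]

@[simp] lemma dotL_apply (v w : Fin k → F) : dotL v w = dotProduct v w := rfl

lemma dotL_surjective {v : Fin k → F} (hv : v ≠ 0) : Function.Surjective (dotL v) := by
  obtain ⟨i, hi⟩ : ∃ i, v i ≠ 0 := by
    by_contra h; push_neg at h; exact hv (funext h)
  intro c
  refine ⟨Pi.single i ((v i)⁻¹ * c), ?_⟩
  simp [dotProduct_single]
  field_simp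

/-- If the kernel of `dotL v` is contained in that of `dotL u`, then `u` is a multiple of `v`. -/
lemma exists_smul_of_ker_le {u v : Fin k → F}
    (h : LinearMap.ker (dotL v) ≤ LinearMap.ker (dotL u)) : ∃ c : F, c • v = u := by
  have hinf : ⨅ _ : Unit, LinearMap.ker (dotL v) ≤ LinearMap.ker (dotL u) := by
    simpa using h
  have hmem := mem_span_of_iInf_ker_le_ker (L := fun _ : Unit => dotL v) (K := dotL u) hinf
  rw [Set.range_const, Submodule.mem_span_singleton] at hmem
  obtain ⟨c, hc⟩ := hmem
  refine ⟨c, ?_⟩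
  funext i
  have := congrArg (fun (f : (Fin k → F) →ₗ[F] F) => f (Pi.single i 1)) hc
  simpa [dotProduct_single] using this

lemma pair_surjective {u v : Fin k → F} (hu : u ≠ 0) (hv : v ≠ 0)
    (h : ∀ c : F, c • v ≠ u) : Function.Surjective ((dotL u).prod (dotL v)) := by
  have h' : ∀ c : F, c • u ≠ v := by
    intro c hc
    rcases eq_or_ne c 0 with rfl | hc0
    · simp at hc; exact hv hc.symm
    · exact h c⁻¹ (by rw [← hc, smul_smul, inv_mul_cancel₀ hc0, one_smul])
  have h1 : ∃ w, dotProduct u w ≠ 0 ∧ dotProduct v w = 0 := by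
    by_contra hcon
    push_neg at hcon
    have : LinearMap.ker (dotL v) ≤ LinearMap.ker (dotL u) := by
      intro w hw
      simp only [LinearMap.mem_ker, dotL_apply] at *
      by_contra hne
      exact hcon w hne hw
    obtain ⟨c, hc⟩ := exists_smul_of_ker_le this
    exact h c hc
  have h2 : ∃ w, dotProduct v w ≠ 0 ∧ dotProduct u w = 0 := by
    by_contra hcon
    push_neg at hcon
    have : LinearMap.ker (dotL u) ≤ LinearMap.ker (dotL v) := by
      intro w hw
      simp only [LinearMap.mem_ker, dotL_apply] at *
      by_contra hne
      exact hcon w hne hw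
    obtain ⟨c, hc⟩ := exists_smul_of_ker_le this
    exact h' c hc
  obtain ⟨w₁, hw₁, hw₁'⟩ := h1
  obtain ⟨w₂, hw₂, hw₂'⟩ := h2
  rintro ⟨a, b⟩
  refine ⟨(a * (dotProduct u w₁)⁻¹) • w₁ + (b * (dotProduct v w₂)⁻¹) • w₂, ?_⟩
  have e1 : (dotL u) ((a * (dotProduct u w₁)⁻¹) • w₁ + (b * (dotProduct v w₂)⁻¹) • w₂) = a := by
    rw [map_add, LinearMap.map_smul, LinearMap.map_smul]
    simp only [dotL_apply, smul_eq_mul, hw₂']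
    field_simp
    ring
  have e2 : (dotL v) ((a * (dotProduct u w₁)⁻¹) • w₁ + (b * (dotProduct v w₂)⁻¹) • w₂) = b := by
    rw [map_add, LinearMap.map_smul, LinearMap.map_smul]
    simp only [dotL_apply, smul_eq_mul, hw₁']
    field_simp
    ring
  exact Prod.ext e1 e2

/-- Counting the kernel of a surjective linear map to `W`. -/
lemma card_ker_mul {W : Type} [AddCommGroup W] [Module F W] [Fintype W] [DecidableEq W]
    (f : (Fin k → F) →ₗ[F] W) (hf : Function.Surjective f) :
    ((Finset.univ.filter (fun v : Fin k → F => f v = 0)).card) * Fintype.card W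
      = Fintype.card F ^ k := by
  classical
  have h1 := Submodule.card_eq_card_quotient_mul_card (LinearMap.ker f)
  have h2 : Nat.card ((Fin k → F) ⧸ LinearMap.ker f) = Fintype.card W :=
    (Nat.card_congr (f.quotKerEquivOfSurjective hf).toEquiv).trans (Nat.card_eq_fintype_card)
  have h3 : Nat.card (LinearMap.ker f)
      = (Finset.univ.filter (fun v : Fin k → F => f v = 0)).card := by
    rw [Nat.card_eq_fintype_card, Fintype.card_subtype]
    congr 1
    ext v
    simp [LinearMap.mem_ker]
  have h4 : Nat.card (Fin k → F) = Fintype.card F ^ k := by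
    rw [Nat.card_eq_fintype_card, Fintype.card_fun, Fintype.card_fin]
  rw [h2, h3, h4] at h1
  omega

/-- Sum of the indicator of the kernel. -/
lemma sum_ind_ker {W : Type} [AddCommGroup W] [Module F W] [Fintype W] [DecidableEq W]
    (f : (Fin k → F) →ₗ[F] W) (hf : Function.Surjective f) :
    (∑ v : Fin k → F, (if f v = 0 then (1 : ℝ) else 0)) * Fintype.card W
      = (Fintype.card F : ℝ) ^ k := by
  rw [Finset.sum_boole]
  exact_mod_cast congrArg (Nat.cast : ℕ → ℝ) (card_ker_mul f hf)




lemma fiber_card (w : Projectivization F (Fin k → F)) :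
    Fintype.card {x : {v : Fin k → F // v ≠ 0} // Projectivization.mk F x.1 x.2 = w}
      = Fintype.card F - 1 := by
  classical
  rw [← Fintype.card_units (α := F)]
  symm
  apply Fintype.card_of_bijective (f := fun c : Fˣ =>
    (⟨⟨(c : F) • w.rep, smul_ne_zero c.ne_zero w.rep_nonzero⟩, by
      refine ((Projectivization.mk_eq_mk_iff F _ _ _ w.rep_nonzero).2
        ⟨c, (Units.smul_def c w.rep)⟩).trans (Projectivization.mk_rep w)⟩))
  constructor
  · intro c c' hcc
    have hval : (c : F) • w.rep = (c' : F) • w.rep := congrArg (fun x => x.1.1) hcc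
    have := smul_left_injective F w.rep_nonzero hval
    exact Units.ext this
  · rintro ⟨⟨u, hu⟩, hx⟩
    obtain ⟨c, hc⟩ := (Projectivization.mk_eq_mk_iff F u w.rep hu w.rep_nonzero).1
      (hx.trans (Projectivization.mk_rep w).symm)
    refine ⟨c, Subtype.ext (Subtype.ext ?_)⟩
    show (c : F) • w.rep = u
    rw [← Units.smul_def]; exact hc

lemma proj_sum (g : (Fin k → F) → ℝ) (hg0 : g 0 = 0)
    (hginv : ∀ (c : Fˣ) (u : Fin k → F), g ((c : F) • u) = g u) :
    ((Fintype.card F : ℝ) - 1) * ∑ w : Projectivization F (Fin k → F), g w.rep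
      = ∑ u : Fin k → F, g u := by
  classical
  have step1 : ∑ u : Fin k → F, g u = ∑ u : {v : Fin k → F // v ≠ 0}, g u.1 := by
    rw [← Finset.sum_subtype (Finset.univ.filter (fun v : Fin k → F => v ≠ 0))
      (by simp) g]
    refine (Finset.sum_subset (Finset.filter_subset _ _) ?_).symm
    intro x _ hx
    simp only [Finset.mem_filter, Finset.mem_univ, true_and, not_not] at hx
    rw [hx]; exact hg0
  rw [step1, ← Fintype.sum_fiberwise
    (fun (x : {v : Fin k → F // v ≠ 0}) => Projectivization.mk F x.1 x.2)
    (fun x => g x.1), Finset.mul_sum]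
  refine Finset.sum_congr rfl fun w _ => ?_
  have hconst : ∀ x : {x : {v : Fin k → F // v ≠ 0} // Projectivization.mk F x.1 x.2 = w},
      g x.1.1 = g w.rep := by
    rintro ⟨⟨u, hu⟩, hx⟩
    obtain ⟨c, hc⟩ := (Projectivization.mk_eq_mk_iff F u w.rep hu w.rep_nonzero).1
      (hx.trans (Projectivization.mk_rep w).symm)
    show g u = g w.rep
    rw [← hc, Units.smul_def, hginv]
  rw [Finset.sum_congr rfl (fun x _ => hconst x), Finset.sum_const, nsmul_eq_mul,
    Finset.card_univ, fiber_card, Nat.cast_sub Fintype.card_pos, Nat.cast_one]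

lemma isUnit_smul_one_add_smul_J {I : Type} [Fintype I] [DecidableEq I] {a b : ℝ}
    (ha : 0 < a) (hb : 0 ≤ b) :
    IsUnit (a • (1 : Matrix I I ℝ) + b • (Matrix.of fun _ _ => (1 : ℝ))) := by
  set J : Matrix I I ℝ := Matrix.of fun _ _ => (1 : ℝ) with hJdef
  set n : ℝ := (Fintype.card I : ℝ) with hn
  have hn0 : 0 ≤ n := Nat.cast_nonneg _
  have hab : 0 < a + b * n := by positivity
  have hJJ : J * J = n • J := by
    ext i j
    simp [Matrix.mul_apply, hJdef, hn]
  set d : ℝ := -b / (a * (a + b * n)) with hd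
  refine (Matrix.isUnit_iff_isUnit_det _).2 (Matrix.isUnit_det_of_right_inverse (B := a⁻¹ • 1 + d • J) ?_)
  have expand : (a • (1 : Matrix I I ℝ) + b • J) * (a⁻¹ • 1 + d • J)
      = (a * a⁻¹) • (1 : Matrix I I ℝ) + (a * d + b * a⁻¹ + b * d * n) • J := by
    simp only [add_mul, mul_add, Matrix.smul_mul, Matrix.mul_smul, smul_smul,
      Matrix.one_mul, Matrix.mul_one, hJJ]
    module
  rw [expand, mul_inv_cancel₀ ha.ne', one_smul]
  have hzero : a * d + b * a⁻¹ + b * d * n = 0 := by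
    rw [hd]
    field_simp
    ring
  rw [hzero, zero_smul, add_zero]

end Aux

/-- the real matrix `M_{k,q}` is invertible. -/
theorem stmt_5 (q k : ℕ) (hq : IsPrimePow q) (hk : 0 < k)
    (F : Type) [Field F] [Fintype F] [DecidableEq F] (hF : Fintype.card F = q) :
    IsUnit (Mkq F k) := by
  classical
  set c : ℝ := (Fintype.card F : ℝ) with hc
  have hc2 : (2 : ℝ) ≤ c := by
    have h2 : 2 ≤ Fintype.card F := Fintype.one_lt_card
    rw [hc]
    exact_mod_cast h2
  have hc0 : (0 : ℝ) < c := by linarith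
  have hc1 : (0 : ℝ) < c - 1 := by linarith
  set M := Mkq F k with hM
  have hMapp : ∀ v w : Projectivization F (Fin k → F),
      M v w = if dotProduct v.rep w.rep = 0 then (0 : ℝ) else 1 := fun v w => rfl
  have hcard : ((Fintype.card (Fin k → F)) : ℝ) = c ^ k := by
    rw [Fintype.card_fun, Fintype.card_fin]
    push_cast
    rfl
  set J : Matrix (Projectivization F (Fin k → F)) (Projectivization F (Fin k → F)) ℝ :=
    Matrix.of fun _ _ => (1 : ℝ) with hJdef
  have key : (c ^ 2 * (c - 1)) • (M * Mᵀ)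
      = (c ^ (k + 1) - c ^ k) • (1 : Matrix _ _ ℝ)
        + (c ^ (k + 2) - 2 * c ^ (k + 1) + c ^ k) • J := by
    ext v v'
    simp only [Matrix.smul_apply, Matrix.add_apply, Matrix.mul_apply, Matrix.transpose_apply,
      Matrix.of_apply, smul_eq_mul, hJdef, mul_one]
    set g : (Fin k → F) → ℝ := fun u =>
      (if dotProduct v.rep u = 0 then (0 : ℝ) else 1) *
      (if dotProduct v'.rep u = 0 then (0 : ℝ) else 1) with hg
    have hsum_eq : ∑ w, M v w * M v' w = ∑ w : Projectivization F (Fin k → F), g w.rep := by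
      refine Finset.sum_congr rfl fun w _ => ?_
      rw [hMapp, hMapp]
    have hg0 : g 0 = 0 := by simp [hg]
    have hginv : ∀ (cc : Fˣ) (u : Fin k → F), g ((cc : F) • u) = g u := by
      intro cc u
      have h1 : ∀ x : Fin k → F,
          dotProduct x ((cc : F) • u) = (cc : F) * dotProduct x u := by
        intro x
        rw [dotProduct_smul, smul_eq_mul]
      simp only [hg, h1, mul_eq_zero, cc.ne_zero, false_or]
    have htrans := proj_sum g hg0 hginv
    rw [← hc] at htrans
    have hS1 := sum_ind_ker (dotL v.rep) (dotL_surjective v.rep_nonzero)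
    rw [← hc] at hS1
    rcases eq_or_ne v v' with rfl | hvv
    · have hdiag : ∀ u : Fin k → F,
          g u = 1 - (if dotL v.rep u = 0 then (1 : ℝ) else 0) := by
        intro u
        by_cases h : dotProduct v.rep u = 0 <;> simp [hg, h]
      have hU : ∑ u : Fin k → F, g u
          = c ^ k - ∑ u : Fin k → F, (if dotL v.rep u = 0 then (1 : ℝ) else 0) := by
        rw [Finset.sum_congr rfl fun u _ => hdiag u, Finset.sum_sub_distrib,
          Finset.sum_const, Finset.card_univ, nsmul_eq_mul, mul_one, hcard]
      rw [hsum_eq, Matrix.one_apply_eq]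
      linear_combination c ^ 2 * htrans + c ^ 2 * hU + (-c) * hS1
    · have hne2 : ∀ cc : F, cc • v'.rep ≠ v.rep := by
        intro cc hcc
        rcases eq_or_ne cc 0 with rfl | hcc0
        · rw [zero_smul] at hcc
          exact v.rep_nonzero hcc.symm
        · apply hvv
          rw [← Projectivization.mk_rep v, ← Projectivization.mk_rep v']
          exact (Projectivization.mk_eq_mk_iff F v.rep v'.rep v.rep_nonzero
            v'.rep_nonzero).2 ⟨Units.mk0 cc hcc0, by rw [Units.smul_def]; exact hcc⟩
      have hS2 := sum_ind_ker (dotL v'.rep) (dotL_surjective v'.rep_nonzero)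
      rw [← hc] at hS2
      have hS12 := sum_ind_ker ((dotL v.rep).prod (dotL v'.rep))
        (pair_surjective v.rep_nonzero v'.rep_nonzero hne2)
      rw [Fintype.card_prod] at hS12
      push_cast at hS12
      rw [← hc] at hS12
      have hexpand : ∀ u : Fin k → F,
          g u = 1 - (if dotL v.rep u = 0 then (1 : ℝ) else 0)
            - (if dotL v'.rep u = 0 then (1 : ℝ) else 0)
            + (if ((dotL v.rep).prod (dotL v'.rep)) u = 0 then (1 : ℝ) else 0) := by
        intro u
        by_cases h1 : dotProduct v.rep u = 0 <;>
          by_cases h2 : dotProduct v'.rep u = 0 <;>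
          simp [hg, h1, h2, LinearMap.prod_apply, Prod.ext_iff]
      have hU : ∑ u : Fin k → F, g u
          = c ^ k - (∑ u : Fin k → F, (if dotL v.rep u = 0 then (1 : ℝ) else 0))
            - (∑ u : Fin k → F, (if dotL v'.rep u = 0 then (1 : ℝ) else 0))
            + (∑ u : Fin k → F,
                (if ((dotL v.rep).prod (dotL v'.rep)) u = 0 then (1 : ℝ) else 0)) := by
        rw [Finset.sum_congr rfl fun u _ => hexpand u]
        rw [Finset.sum_add_distrib, Finset.sum_sub_distrib, Finset.sum_sub_distrib,
          Finset.sum_const, Finset.card_univ, nsmul_eq_mul, mul_one, hcard]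
      rw [hsum_eq, Matrix.one_apply_ne hvv]
      linear_combination c ^ 2 * htrans + c ^ 2 * hU + (-c) * hS1 + (-c) * hS2 + hS12
  have hs : (0 : ℝ) < c ^ 2 * (c - 1) := by positivity
  set a : ℝ := (c ^ (k + 1) - c ^ k) / (c ^ 2 * (c - 1)) with ha
  set b : ℝ := (c ^ (k + 2) - 2 * c ^ (k + 1) + c ^ k) / (c ^ 2 * (c - 1)) with hb
  have hMM : M * Mᵀ = a • (1 : Matrix _ _ ℝ) + b • J := by
    apply smul_right_injective _ hs.ne'
    show (c ^ 2 * (c - 1)) • (M * Mᵀ) = (c ^ 2 * (c - 1)) • (a • (1 : Matrix _ _ ℝ) + b • J)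
    rw [key, smul_add, smul_smul, smul_smul, ha, hb]
    congr 1
    · congr 1
      field_simp
    · congr 1
      field_simp
  have hapos : 0 < a := by
    rw [ha]
    apply div_pos _ hs
    have h1 : c ^ (k + 1) - c ^ k = c ^ k * (c - 1) := by ring
    rw [h1]; positivity
  have hbpos : 0 ≤ b := by
    rw [hb]
    apply div_nonneg _ hs.le
    have h1 : c ^ (k + 2) - 2 * c ^ (k + 1) + c ^ k = c ^ k * (c - 1) ^ 2 := by ring
    rw [h1]; positivity
  have hA : IsUnit (M * Mᵀ) := by
    rw [hMM, hJdef]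
    exact isUnit_smul_one_add_smul_J hapos hbpos
  have hdet := (Matrix.isUnit_iff_isUnit_det _).1 hA
  have hinv : M * (Mᵀ * (M * Mᵀ)⁻¹) = 1 := by
    rw [← Matrix.mul_assoc]
    exact Matrix.mul_nonsing_inv _ hdet
  exact (Matrix.isUnit_iff_isUnit_det _).2 (Matrix.isUnit_det_of_right_inverse hinv)
end

section
/- Let k be a positive integer, q a prime power, and c a positive integer. The multiset S consisting of (q^k − 1)/(q − 1) copies of c is q-projection-forcing; in particular its split difference satisfies δ_q(S) = c > −q^{k−1}. -/
open Matrix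

section ForcingProof

open LinearMap Module Finset

set_option linter.unusedSectionVars false
set_option maxHeartbeats 1000000

attribute [local instance] Fintype.ofFinite

variable {F : Type} [Field F] [Fintype F] [DecidableEq F]
variable {V : Type*} [AddCommGroup V] [Module F V] [Finite V] [DecidableEq V]





variable {F : Type} [Field F] [Fintype F] [DecidableEq F]
variable {V : Type*} [AddCommGroup V] [Module F V] [Finite V] [DecidableEq V]

private def chi (x : F) : ℤ := if x = 0 then 0 else 1

private lemma T_count (W : Submodule F V) (e : V →ₗ[F] F) :
    (∑ u : W, chi (e u)) = (Nat.card W : ℤ) - Nat.card ↥(W ⊓ ker e) := by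

  have h1 : (∑ u : W, chi (e u)) = ∑ u : W, (1 - if e (u : V) = 0 then (1:ℤ) else 0) := by
    refine Finset.sum_congr rfl fun u _ => ?_
    by_cases h : e (u : V) = 0 <;> simp [chi, h]
  rw [h1, Finset.sum_sub_distrib, Finset.sum_const]
  have h2 : (∑ u : W, if e (u : V) = 0 then (1:ℤ) else 0)
      = ((Finset.univ.filter fun u : W => e (u : V) = 0).card : ℤ) := by
    rw [Finset.card_filter]; push_cast; rfl
  have h3 : (Finset.univ.filter fun u : W => e (u : V) = 0).card
      = Nat.card ↥(W ⊓ ker e) := by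
    rw [← Fintype.card_subtype, ← Nat.card_eq_fintype_card]
    refine Nat.card_congr ⟨fun u => ⟨u.1.1, Submodule.mem_inf.mpr ⟨u.1.2, u.2⟩⟩,
      fun v => ⟨⟨v.1, (Submodule.mem_inf.mp v.2).1⟩, (Submodule.mem_inf.mp v.2).2⟩,
      fun u => rfl, fun v => rfl⟩
  rw [h2, h3, Nat.card_eq_fintype_card]
  simp [mul_comm]

private lemma sum_over_submodule {n m : ℕ} (f : Fin n → (V →ₗ[F] F)) (g : Fin m → (V →ₗ[F] F))
    (c : ℤ) (heq : ∀ v : V, v ≠ 0 → (∑ j, chi (f j v)) - (∑ i, chi (g i v)) = c)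
    (W : Submodule F V) :
    (∑ j, ((Nat.card W : ℤ) - Nat.card ↥(W ⊓ ker (f j))))
      - (∑ i, ((Nat.card W : ℤ) - Nat.card ↥(W ⊓ ker (g i)))) = c * ((Nat.card W : ℤ) - 1) := by

  have key : ∑ u : W, ((∑ j, chi (f j (u : V))) - (∑ i, chi (g i (u : V))))
      = c * ((Nat.card W : ℤ) - 1) := by
    have hterm : ∀ u : W, ((∑ j, chi (f j (u : V))) - (∑ i, chi (g i (u : V))))
        = (c - if (u : V) = 0 then c else 0) := by
      intro u
      by_cases h : (u : V) = 0
      · simp [h, chi]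
      · simp only [if_neg h]; rw [heq _ h]; ring
    rw [Finset.sum_congr rfl fun u _ => hterm u, Finset.sum_sub_distrib, Finset.sum_const]
    have h0 : (∑ u : W, if (u : V) = 0 then c else 0) = c := by
      have hcond : ∀ u : W, ((u : V) = 0) = (u = (0 : W)) := by
        intro u; simp [Submodule.coe_eq_zero]
      simp_rw [hcond]
      rw [Finset.sum_ite_eq' Finset.univ (0 : W) (fun _ => c)]
      simp
    rw [h0, Nat.card_eq_fintype_card]
    simp [mul_comm, mul_sub]
  simp_rw [← T_count]
  rw [show (∑ j, ∑ u : W, chi (f j (u:V))) = ∑ u : W, ∑ j, chi (f j (u:V)) from Finset.sum_comm,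
      show (∑ i, ∑ u : W, chi (g i (u:V))) = ∑ u : W, ∑ i, chi (g i (u:V)) from Finset.sum_comm,
      ← Finset.sum_sub_distrib, key]

open scoped Classical



private lemma natCard_submodule (W : Submodule F V) :
    Nat.card W = Fintype.card F ^ finrank F W := by
  cases nonempty_fintype W
  rw [Nat.card_eq_fintype_card, card_eq_pow_finrank (K := F)]
private lemma finrank_ker_of_ne_zero (h : V →ₗ[F] F) (hh : h ≠ 0) :
    finrank F (ker h) = finrank F V - 1 ∧ 1 ≤ finrank F V := by
  have : FiniteDimensional F V := Module.Finite.of_finite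
  have hrange : range h = ⊤ :=
    LinearMap.range_eq_top.mpr (LinearMap.surjective_of_ne_zero hh)
  have hrn := LinearMap.finrank_range_add_finrank_ker h
  rw [hrange, finrank_top, finrank_self] at hrn
  have := Submodule.finrank_le (ker h)
  omega

-- the inf of two distinct hyperplane kernels
private lemma finrank_inf_kers (e h : V →ₗ[F] F) (he : e ≠ 0) (hh : h ≠ 0)
    (hne : ker e ≠ ker h) :
    finrank F ↥(ker h ⊓ ker e) = finrank F V - 2 ∧ 2 ≤ finrank F V := by
  have : FiniteDimensional F V := Module.Finite.of_finite
  obtain ⟨hke, hd1⟩ := finrank_ker_of_ne_zero e he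
  obtain ⟨hkh, -⟩ := finrank_ker_of_ne_zero h hh
  set d := finrank F V with hd
  have hle : ¬ (ker e ≤ ker h) := by
    intro hle
    exact hne (Submodule.eq_of_le_of_finrank_le hle (by omega))
  have hlt : ker h < ker h ⊔ ker e :=
    lt_of_le_of_ne le_sup_left (fun heq => hle (heq ▸ le_sup_right))
  have h1 : finrank F ↥(ker h) < finrank F ↥(ker h ⊔ ker e) :=
    Submodule.finrank_lt_finrank_of_lt hlt
  have h2 : finrank F ↥(ker h ⊔ ker e) ≤ d := Submodule.finrank_le _
  have h3 := Submodule.finrank_sup_add_finrank_inf_eq (ker h) (ker e)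
  -- need d ≥ 2 : if d = 1 then both kernels are ⊥
  have hd2 : 2 ≤ d := by
    rcases Nat.lt_or_ge d 2 with hlt2 | hge
    · exfalso
      have h1e : finrank F ↥(ker e) = 0 := by omega
      have h1h : finrank F ↥(ker h) = 0 := by omega
      have := Submodule.finrank_eq_zero.mp h1e
      have := Submodule.finrank_eq_zero.mp h1h
      exact hne (by rw [‹ker e = ⊥›, ‹ker h = ⊥›])
    · exact hge
  omega


private lemma sum_sub_ite {k : ℕ} (P : Fin k → Prop) [DecidablePred P] (X Y : ℤ) :
    (∑ j, (X - if P j then X else Y))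
      = ((Finset.univ.filter fun j => ¬ P j).card : ℤ) * (X - Y) := by
  have h : ∀ j, (X - if P j then X else Y) = if P j then 0 else (X - Y) := by
    intro j; by_cases h : P j <;> simp [h]
  simp_rw [h]
  rw [Finset.sum_ite, Finset.sum_const, Finset.sum_const]
  simp [mul_comm]

private lemma card_split {k : ℕ} (P Q : Fin k → Prop) [DecidablePred P] [DecidablePred Q] :
    (Finset.univ.filter fun j => P j).card
      = (Finset.univ.filter fun j => P j ∧ Q j).card
        + (Finset.univ.filter fun j => P j ∧ ¬ Q j).card := by
  rw [← Finset.filter_filter, ← Finset.filter_filter,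
    Finset.card_filter_add_card_filter_not]

private lemma key_count {n m : ℕ} (f : Fin n → (V →ₗ[F] F)) (g : Fin m → (V →ₗ[F] F))
    (c : ℤ) (hc : 0 < c)
    (heq : ∀ v : V, v ≠ 0 → (∑ j, chi (f j v)) - (∑ i, chi (g i v)) = c)
    (hsum : ∀ W : Submodule F V,
      (∑ j, ((Nat.card W : ℤ) - Nat.card ↥(W ⊓ ker (f j))))
        - (∑ i, ((Nat.card W : ℤ) - Nat.card ↥(W ⊓ ker (g i)))) = c * ((Nat.card W : ℤ) - 1))
    (h : V →ₗ[F] F) (hh : h ≠ 0) :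
    ((Finset.univ.filter fun i => g i ≠ 0 ∧ ker (g i) = ker h).card : ℤ)
      < ((Finset.univ.filter fun j => f j ≠ 0 ∧ ker (f j) = ker h).card : ℤ) := by
  have hFD : FiniteDimensional F V := Module.Finite.of_finite
  set q : ℕ := Fintype.card F with hqdef
  have hq2 : 2 ≤ q := Fintype.one_lt_card
  set d : ℕ := finrank F V with hddef
  obtain ⟨hkh, hd1⟩ := finrank_ker_of_ne_zero h hh
  rcases Nat.lt_or_ge d 2 with hd_lt | hd2
  -- case d = 1
  · have hd : d = 1 := by omega
    have hbot : ∀ e : V →ₗ[F] F, e ≠ 0 → ker e = ⊥ := by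
      intro e he
      obtain ⟨hke, -⟩ := finrank_ker_of_ne_zero e he
      exact Submodule.finrank_eq_zero.mp (by omega)
    obtain ⟨v₀, hv₀⟩ : ∃ v₀, h v₀ ≠ 0 := by
      by_contra hcon; push_neg at hcon
      exact hh (LinearMap.ext fun v => by simpa using hcon v)
    have hv₀ne : v₀ ≠ 0 := fun h0 => hv₀ (h0 ▸ map_zero h)
    have hchi : ∀ e : V →ₗ[F] F, chi (e v₀) = if e ≠ 0 ∧ ker e = ker h then 1 else 0 := by
      intro e
      by_cases he : e = 0
      · simp [he, chi]
      · have hkere : ker e = ker h := by rw [hbot e he, hbot h hh]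
        have : e v₀ ≠ 0 := by
          intro h0
          have : v₀ ∈ ker e := h0
          rw [hbot e he] at this
          exact hv₀ne (by simpa using this)
        simp [chi, this, he, hkere]
    have := heq v₀ hv₀ne
    simp_rw [hchi] at this
    rw [Finset.sum_boole, Finset.sum_boole] at this
    omega
  -- case d ≥ 2
  · have hcount1 : ∀ e : V →ₗ[F] F,
        ((Nat.card ↥((⊤ : Submodule F V) ⊓ ker e)) : ℤ)
          = if e = 0 then ((q:ℤ)^d) else (q:ℤ)^(d-1) := by
      intro e
      rw [top_inf_eq]
      by_cases he : e = 0
      · rw [if_pos he, natCard_submodule]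
        have : ker e = ⊤ := by rw [he]; exact ker_zero
        rw [this, finrank_top]
        push_cast [← hddef]; ring
      · rw [if_neg he, natCard_submodule]
        obtain ⟨hke, -⟩ := finrank_ker_of_ne_zero e he
        rw [hke]
        push_cast [← hddef]; ring
    have hcount2 : ∀ e : V →ₗ[F] F,
        ((Nat.card ↥(ker h ⊓ ker e)) : ℤ)
          = if e = 0 ∨ ker e = ker h then ((q:ℤ)^(d-1)) else (q:ℤ)^(d-2) := by
      intro e
      by_cases he : e = 0
      · rw [if_pos (Or.inl he), natCard_submodule]
        have : ker e = ⊤ := by rw [he]; exact ker_zero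
        rw [this, inf_top_eq, hkh]
        push_cast [← hddef]; ring
      · by_cases hke : ker e = ker h
        · rw [if_pos (Or.inr hke), natCard_submodule, hke, inf_idem, hkh]
          push_cast [← hddef]; ring
        · rw [if_neg (by tauto), natCard_submodule,
            (finrank_inf_kers e h he hh hke).1]
          push_cast [← hddef]; ring
    have htop : ((Nat.card ↥(⊤ : Submodule F V)) : ℤ) = (q:ℤ)^d := by
      rw [natCard_submodule, finrank_top]; push_cast [← hddef]; ring
    have hkerh : ((Nat.card ↥(ker h)) : ℤ) = (q:ℤ)^(d-1) := by
      rw [natCard_submodule, hkh]; push_cast [← hddef]; ring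
    have e1 := hsum ⊤
    simp only [hcount1, htop] at e1
    rw [sum_sub_ite (fun j => f j = 0), sum_sub_ite (fun i => g i = 0)] at e1
    have e2 := hsum (ker h)
    simp only [hcount2, hkerh] at e2
    rw [sum_sub_ite (fun j => f j = 0 ∨ ker (f j) = ker h),
      sum_sub_ite (fun i => g i = 0 ∨ ker (g i) = ker h)] at e2
    have hfilf : (Finset.univ.filter fun j => ¬ (f j = 0 ∨ ker (f j) = ker h))
        = Finset.univ.filter fun j => ¬ f j = 0 ∧ ¬ ker (f j) = ker h := by
      apply Finset.filter_congr; intro j _; simp [not_or]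
    have hfilg : (Finset.univ.filter fun i => ¬ (g i = 0 ∨ ker (g i) = ker h))
        = Finset.univ.filter fun i => ¬ g i = 0 ∧ ¬ ker (g i) = ker h := by
      apply Finset.filter_congr; intro i _; simp [not_or]
    rw [hfilf, hfilg] at e2
    set A1 : ℕ := (Finset.univ.filter fun j => ¬ f j = 0 ∧ ker (f j) = ker h).card with hA1
    set A2 : ℕ := (Finset.univ.filter fun j => ¬ f j = 0 ∧ ¬ ker (f j) = ker h).card with hA2
    set B1 : ℕ := (Finset.univ.filter fun i => ¬ g i = 0 ∧ ker (g i) = ker h).card with hB1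
    set B2 : ℕ := (Finset.univ.filter fun i => ¬ g i = 0 ∧ ¬ ker (g i) = ker h).card with hB2
    have hsplitf : (Finset.univ.filter fun j => ¬ f j = 0).card = A1 + A2 :=
      card_split (fun j => ¬ f j = 0) (fun j => ker (f j) = ker h)
    have hsplitg : (Finset.univ.filter fun i => ¬ g i = 0).card = B1 + B2 :=
      card_split (fun i => ¬ g i = 0) (fun i => ker (g i) = ker h)
    rw [hsplitf, hsplitg] at e1
    have hp1 : ((q:ℤ))^(d-1) = (q:ℤ)^(d-2) * q := by
      rw [← pow_succ]; congr 1; omega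
    have hp2 : ((q:ℤ))^d = (q:ℤ)^(d-1) * q := by
      rw [← pow_succ]; congr 1; omega
    have h5 : (((A1:ℤ)) - B1) * ((q:ℤ)^d - (q:ℤ)^(d-1)) = c * ((q:ℤ) - 1) := by
      push_cast at e1 e2
      linear_combination e1 - (q:ℤ) * e2 + (c - (A2:ℤ) + B2) * hp2 + ((A2:ℤ) - B2) * hp1
    have hq2' : (2:ℤ) ≤ (q:ℤ) := by exact_mod_cast hq2
    have hqpos : (0:ℤ) < (q:ℤ)^(d-1) := by positivity
    have hXpos : (0:ℤ) < (q:ℤ)^d - (q:ℤ)^(d-1) := by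
      rw [hp2]; nlinarith
    have : (0:ℤ) < ((A1:ℤ) - B1) * ((q:ℤ)^d - (q:ℤ)^(d-1)) := by
      rw [h5]; nlinarith
    have hfin : (B1:ℤ) < (A1:ℤ) := by nlinarith
    exact hfin
private lemma hammingNorm_int_eq {N : ℕ} (v : Fin N → F) :
    (hammingNorm v : ℤ) = ∑ j, chi (v j) := by
  rw [hammingNorm, Finset.card_filter]
  push_cast
  refine Finset.sum_congr rfl fun j _ => ?_
  by_cases h : v j = 0 <;> simp [chi, h]

private lemma functional_prop {V : Type*} [AddCommGroup V] [Module F V]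
    (e h : V →ₗ[F] F) (hh : h ≠ 0) (hker : ker e = ker h) :
    ∃ t : F, t ≠ 0 ∧ e = t • h := by
  obtain ⟨v₀, hv₀⟩ : ∃ v₀, h v₀ ≠ 0 := by
    by_contra hcon; push_neg at hcon
    exact hh (LinearMap.ext fun v => by simpa using hcon v)
  have he0 : e v₀ ≠ 0 := by
    intro h0
    have hm : v₀ ∈ ker e := h0
    rw [hker] at hm
    exact hv₀ hm
  refine ⟨e v₀ / h v₀, div_ne_zero he0 hv₀, ?_⟩
  ext v
  have hmem : v - (h v / h v₀) • v₀ ∈ ker h := by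
    simp only [LinearMap.mem_ker, map_sub, _root_.map_smul, smul_eq_mul]
    field_simp
    ring
  rw [← hker] at hmem
  have h2 : e v - (h v / h v₀) * e v₀ = 0 := by
    simpa [map_sub, _root_.map_smul, smul_eq_mul] using hmem
  simp only [LinearMap.smul_apply, smul_eq_mul]
  field_simp at h2 ⊢
  linear_combination h2

private lemma abstract_forcing {n m : ℕ} (f : Fin n → (V →ₗ[F] F)) (g : Fin m → (V →ₗ[F] F))
    (c : ℤ) (hc : 0 < c)
    (heq : ∀ v : V, v ≠ 0 → (∑ j, chi (f j v)) - (∑ i, chi (g i v)) = c) :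
    ∃ M : Matrix (Fin m) (Fin n) F,
      (∀ (v : V) (i : Fin m), g i v = ∑ j, M i j * f j v) ∧
      (∀ i j j', M i j ≠ 0 → M i j' ≠ 0 → j = j') ∧
      (∀ i i' j, M i j ≠ 0 → M i' j ≠ 0 → i = i') := by
  classical
  have hkc := fun (h : V →ₗ[F] F) (hh : h ≠ 0) =>
    key_count f g c hc heq (fun W => sum_over_submodule f g c heq W) h hh
  let I := {i : Fin m // g i ≠ 0}
  let t : I → Finset (Fin n) := fun i =>
    Finset.univ.filter fun j => f j ≠ 0 ∧ ker (f j) = ker (g i.1)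
  have hall : ∀ s : Finset I, s.card ≤ (s.biUnion t).card := by
    intro s
    have himg : s.biUnion t = (s.image fun i => ker (g i.1)).biUnion
        (fun W => Finset.univ.filter fun j => f j ≠ 0 ∧ ker (f j) = W) := by
      ext j
      simp only [Finset.mem_biUnion, Finset.mem_image, Finset.mem_filter, Finset.mem_univ,
        true_and, t]
      constructor
      · rintro ⟨i, hi, h1, h2⟩; exact ⟨_, ⟨i, hi, rfl⟩, h1, h2⟩
      · rintro ⟨W, ⟨i, hi, rfl⟩, h1, h2⟩; exact ⟨i, hi, h1, h2⟩
    rw [himg, Finset.card_biUnion]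
    · rw [Finset.card_eq_sum_card_image (fun i => ker (g i.1)) s]
      refine Finset.sum_le_sum fun W hW => ?_
      obtain ⟨i₀, hi₀s, hi₀W⟩ := Finset.mem_image.mp hW
      have hle : (s.filter fun i => ker (g i.1) = W).card
          ≤ (Finset.univ.filter fun i : Fin m => g i ≠ 0 ∧ ker (g i) = W).card := by
        refine Finset.card_le_card_of_injOn (fun i => i.1) ?_ ?_
        · intro i hi
          rw [Finset.mem_coe, Finset.mem_filter] at hi ⊢
          exact ⟨Finset.mem_univ _, i.2, hi.2⟩
        · intro a _ b _ hab
          exact Subtype.ext hab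
      have hlt : ((Finset.univ.filter fun i : Fin m => g i ≠ 0 ∧ ker (g i) = W).card : ℤ)
          < ((Finset.univ.filter fun j : Fin n => f j ≠ 0 ∧ ker (f j) = W).card : ℤ) := by
        have h2 := hkc (g i₀.1) i₀.2
        rw [show ker (g i₀.1) = W from hi₀W] at h2
        exact h2
      have h3 := Nat.cast_lt (α := ℤ) |>.mp hlt
      omega
    · intro W hW W' hW' hWW'
      refine Finset.disjoint_left.mpr fun j hj hj' => ?_
      rw [Finset.mem_filter] at hj hj'
      exact hWW' (hj.2.2 ▸ hj'.2.2)
  obtain ⟨ι, hinj, hmem⟩ := (Finset.all_card_le_biUnion_card_iff_exists_injective t).mp hall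
  have hmem' : ∀ i : I, f (ι i) ≠ 0 ∧ ker (f (ι i)) = ker (g i.1) := by
    intro i
    have h4 := hmem i
    rw [Finset.mem_filter] at h4
    exact h4.2
  have hscal : ∀ i : I, ∃ s : F, s ≠ 0 ∧ g i.1 = s • f (ι i) := fun i =>
    functional_prop (g i.1) (f (ι i)) (hmem' i).1 ((hmem' i).2).symm
  choose ts hts0 htseq using hscal
  let Mt : Matrix (Fin m) (Fin n) F := fun i j =>
    if hgi : g i ≠ 0 then (if j = ι ⟨i, hgi⟩ then ts ⟨i, hgi⟩ else 0) else 0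
  have hrow1 : ∀ i (hgi : g i ≠ 0) j,
      Mt i j = if j = ι ⟨i, hgi⟩ then ts ⟨i, hgi⟩ else 0 := fun i hgi j => dif_pos hgi
  have hrow0 : ∀ i j, ¬ (g i ≠ 0) → Mt i j = 0 := fun i j h => dif_neg h
  refine ⟨Mt, ?_, ?_, ?_⟩
  · intro v i
    by_cases hgi : g i ≠ 0
    · have hterm : ∀ j, Mt i j * f j v
          = (if j = ι ⟨i, hgi⟩ then ts ⟨i, hgi⟩ * f j v else 0) := by
        intro j
        rw [hrow1 i hgi j]
        by_cases h : j = ι ⟨i, hgi⟩ <;> simp [h]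
      rw [Finset.sum_congr rfl fun j _ => hterm j,
        Finset.sum_ite_eq' Finset.univ (ι ⟨i, hgi⟩), if_pos (Finset.mem_univ _)]
      have hval := congrArg (fun e => e v) (htseq ⟨i, hgi⟩)
      simpa using hval
    · push_neg at hgi
      have hz : ∀ j, Mt i j * f j v = 0 := by
        intro j
        rw [hrow0 i j (by simp [hgi]), zero_mul]
      rw [Finset.sum_congr rfl fun j _ => hz j, Finset.sum_const_zero, hgi]
      rfl
  · intro i j j' h1 h2
    by_cases hgi : g i ≠ 0
    · rw [hrow1 i hgi j] at h1
      rw [hrow1 i hgi j'] at h2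
      by_cases e1 : j = ι ⟨i, hgi⟩
      · by_cases e2 : j' = ι ⟨i, hgi⟩
        · rw [e1, e2]
        · rw [if_neg e2] at h2; exact absurd rfl h2
      · rw [if_neg e1] at h1; exact absurd rfl h1
    · rw [hrow0 i j hgi] at h1; exact absurd rfl h1
  · intro i i' j h1 h2
    by_cases hgi : g i ≠ 0
    · by_cases hgi' : g i' ≠ 0
      · rw [hrow1 i hgi j] at h1
        rw [hrow1 i' hgi' j] at h2
        by_cases e1 : j = ι ⟨i, hgi⟩
        · by_cases e2 : j = ι ⟨i', hgi'⟩
          · have h5 : (⟨i, hgi⟩ : I) = ⟨i', hgi'⟩ := hinj (by rw [← e1, ← e2])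
            exact congrArg Subtype.val h5
          · rw [if_neg e2] at h2; exact absurd rfl h2
        · rw [if_neg e1] at h1; exact absurd rfl h1
      · rw [hrow0 i' j hgi'] at h2; exact absurd rfl h2
    · rw [hrow0 i j hgi] at h1; exact absurd rfl h1

private lemma forcing_aux {n m : ℕ} (U : Submodule F (Fin n → F))
    (Vc : Submodule F (Fin m → F)) (φ : U →ₗ[F] Vc) (c : ℤ) (hc : 0 < c)
    (hw : ∀ u : U, u ≠ 0 →
      (hammingNorm (u : Fin n → F) : ℤ) - (hammingNorm ((φ u : Vc) : Fin m → F) : ℤ) = c) :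
    IsProjection φ := by
  classical
  let f : Fin n → (↥U →ₗ[F] F) := fun j => (LinearMap.proj j).comp U.subtype
  let g : Fin m → (↥U →ₗ[F] F) := fun i => (LinearMap.proj i).comp (Vc.subtype.comp φ)
  have heq : ∀ v : ↥U, v ≠ 0 → (∑ j, chi (f j v)) - (∑ i, chi (g i v)) = c := by
    intro v hv
    have h1 := hw v hv
    rw [hammingNorm_int_eq, hammingNorm_int_eq] at h1
    exact h1
  obtain ⟨M, hM, hrow, hcol⟩ := abstract_forcing f g c hc heq
  refine ⟨M, ?_, hrow, hcol⟩
  intro u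
  funext i
  have := hM u i
  exact this

private lemma forcing_replicate (N : ℕ) (c : ℕ) (hc : 0 < c) {n m : ℕ}
    (U : Submodule F (Fin n → F)) (Vc : Submodule F (Fin m → F)) (φ : U →ₗ[F] Vc)
    (hS : projWeightChanges φ = Multiset.replicate N (c : ℤ)) :
    IsProjection φ := by
  classical
  refine forcing_aux U Vc φ (c : ℤ) (by exact_mod_cast hc) ?_
  intro u hu
  have hval := (Multiset.eq_replicate.mp hS).2
  have hpmem : ((hammingNorm (((Projectivization.mk F u hu).rep : U) : Fin n → F) : ℤ)
      - (hammingNorm ((φ (Projectivization.mk F u hu).rep : Vc) : Fin m → F) : ℤ))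
      ∈ projWeightChanges φ :=
    Multiset.mem_map.mpr ⟨Projectivization.mk F u hu,
      Finset.mem_val.mpr (Finset.mem_univ _), rfl⟩
  have hvc := hval _ hpmem
  obtain ⟨a, ha⟩ := Projectivization.exists_smul_eq_mk_rep F u hu
  have ha' : (Projectivization.mk F u hu).rep = a • u := ha.symm
  have hreg : ∀ i : Fin n, IsSMulRegular F ((a : F)) :=
    fun _ => IsLeftRegular.isSMulRegular (mul_right_injective₀ a.ne_zero)
  have hreg' : ∀ i : Fin m, IsSMulRegular F ((a : F)) :=
    fun _ => IsLeftRegular.isSMulRegular (mul_right_injective₀ a.ne_zero)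
  have h1 : (((Projectivization.mk F u hu).rep : U) : Fin n → F)
      = (a : F) • ((u : U) : Fin n → F) := by
    rw [ha', Units.smul_def, Submodule.coe_smul]
  have h2 : ((φ (Projectivization.mk F u hu).rep : Vc) : Fin m → F)
      = (a : F) • ((φ u : Vc) : Fin m → F) := by
    rw [ha', Units.smul_def, _root_.map_smul, Submodule.coe_smul]
  rw [h1, h2, hammingNorm_smul hreg, hammingNorm_smul hreg'] at hvc
  exact hvc

end ForcingProof

/-- the multiset consisting of `(q^k - 1)/(q - 1)` copies of a positive
integer `c` is q-projection-forcing; its split difference is `c > -q^(k-1)`. -/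
theorem stmt_6 (q k : ℕ) (hq : IsPrimePow q) (hk : 0 < k) (c : ℕ) (hc : 0 < c) :
    ProjectionForcing q (Multiset.replicate ((q ^ k - 1) / (q - 1)) (c : ℤ)) ∧
      splitDiff q k (Multiset.replicate ((q ^ k - 1) / (q - 1)) (c : ℤ)) = (c : ℤ) ∧
      (c : ℤ) > -(q : ℤ) ^ (k - 1) := by
  have hq2 : 2 ≤ q := hq.two_le
  obtain ⟨K, rfl⟩ : ∃ K, k = K + 1 := ⟨k - 1, by omega⟩
  have hgeom : ∀ J : ℕ, (q - 1) * (∑ i ∈ Finset.range J, q ^ i) = q ^ J - 1 := by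
    intro J
    induction J with
    | zero => simp
    | succ J ih =>
      rw [Finset.sum_range_succ, Nat.mul_add, ih, Nat.sub_mul, one_mul, pow_succ']
      have h1 : 1 ≤ q ^ J := Nat.one_le_pow _ _ (by omega)
      have h2 : q ^ J ≤ q * q ^ J := Nat.le_mul_of_pos_left _ (by omega)
      omega
  have hNval : (q ^ (K + 1) - 1) / (q - 1) = ∑ i ∈ Finset.range (K + 1), q ^ i :=
    Nat.div_eq_of_eq_mul_left (by omega) (by rw [mul_comm, hgeom])
  refine ⟨?_, ?_, ?_⟩
  · intro F _fF _ftF _dF hcard n m U V φ hS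
    exact forcing_replicate _ c hc U V φ hS
  · have hsorted : ((Multiset.replicate ((q ^ (K+1) - 1) / (q - 1)) (c:ℤ)).sort (· ≤ ·))
        = List.replicate ((q ^ (K+1) - 1) / (q - 1)) (c:ℤ) := by
      refine List.eq_replicate_iff.mpr ⟨?_, ?_⟩
      · rw [Multiset.length_sort, Multiset.card_replicate]
      · intro b hb
        exact Multiset.eq_of_mem_replicate ((Multiset.mem_sort _).mp hb)
    have hK1 : K + 1 - 1 = K := by omega
    have hle : q ^ K ≤ (q ^ (K+1) - 1) / (q - 1) := by
      rw [hNval]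
      exact Finset.single_le_sum (fun i _ => Nat.zero_le _)
        (Finset.mem_range.mpr (by omega))
    have hsub : (q ^ (K+1) - 1) / (q - 1) - q ^ K = ∑ i ∈ Finset.range K, q ^ i := by
      rw [hNval, Finset.sum_range_succ]
      omega
    rw [splitDiff, hsorted, hK1, List.take_replicate, List.drop_replicate,
      inf_eq_left.mpr hle, hsub, List.sum_replicate, List.sum_replicate]
    have hgz : ((q:ℤ) - 1) * (∑ i ∈ Finset.range K, (q:ℤ) ^ i) = (q:ℤ) ^ K - 1 := by
      have h1 : 1 ≤ q ^ K := Nat.one_le_pow _ _ (by omega)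
      have := hgeom K
      have hcast : ((q - 1 : ℕ) : ℤ) * ((∑ i ∈ Finset.range K, q ^ i : ℕ) : ℤ)
          = ((q ^ K - 1 : ℕ) : ℤ) := by exact_mod_cast congrArg (Nat.cast (R := ℤ)) this
      push_cast [Nat.cast_sub (by omega : 1 ≤ q), Nat.cast_sub h1] at hcast
      exact hcast
    have hsmul1 : (q ^ K) • (c:ℤ) = ((q:ℤ))^K * c := by
      rw [nsmul_eq_mul]; push_cast; ring
    have hsmul2 : (∑ i ∈ Finset.range K, q ^ i) • (c:ℤ)
        = (∑ i ∈ Finset.range K, (q:ℤ) ^ i) * c := by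
      rw [nsmul_eq_mul]; push_cast; ring
    rw [hsmul1, hsmul2]
    linear_combination (-(c:ℤ)) * hgz
  · have h1 : (0:ℤ) < (q:ℤ) ^ (K + 1 - 1) := by
      apply pow_pos
      exact_mod_cast (by omega : 0 < q)
    have h2 : (0:ℤ) < (c:ℤ) := by exact_mod_cast hc
    linarith
end

section
/- Let a and b be nonnegative integers and let k ≥ 2. Let S be the multiset consisting of 2^k − 2 copies of a and one copy of b, and suppose S is realized by some F_2-linear map between binary linear codes. Then the following are equivalent: (1) S is 2-projection-forcing; (2) b ≤ 2a; (3) b < 2a + 2^{k−1}. -/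
set_option maxHeartbeats 1000000
set_option synthInstance.maxHeartbeats 100000


open Matrix

namespace Stmt8Aux
open scoped Classical

variable {F : Type} [Field F] [Fintype F] [DecidableEq F]

/-- indicator of nonzero -/
def indF (F : Type) [Field F] [DecidableEq F] : F → ℤ := fun x => if x = 0 then 0 else 1

/-- sign character -/
def epsF (F : Type) [Field F] [DecidableEq F] : F → ℤ := fun x => if x = 0 then 1 else -1

lemma eq_one_of_ne_zero (hF : Fintype.card F = 2) {x : F} (hx : x ≠ 0) : x = 1 := by
  have h1 : Fintype.card Fˣ = 1 := by rw [Fintype.card_units, hF]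
  have h2 : Units.mk0 x hx = 1 := Fintype.card_le_one_iff.mp (le_of_eq h1) _ _
  simpa using congrArg Units.val h2

lemma zero_or_one (hF : Fintype.card F = 2) (x : F) : x = 0 ∨ x = 1 := by
  by_cases h : x = 0
  · exact Or.inl h
  · exact Or.inr (eq_one_of_ne_zero hF h)

lemma one_add_one_eq_zero (hF : Fintype.card F = 2) : (1 + 1 : F) = 0 := by
  by_contra h
  have := eq_one_of_ne_zero hF h
  have : (1 : F) = 0 := by linear_combination this
  simp at this

lemma add_self_eq_zero (hF : Fintype.card F = 2) (x : F) : x + x = 0 := by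
  have : x + x = (1 + 1) * x := by ring
  rw [this, one_add_one_eq_zero hF, zero_mul]

lemma epsF_add (hF : Fintype.card F = 2) (x y : F) : epsF F (x + y) = epsF F x * epsF F y := by
  rcases zero_or_one hF x with hx | hx <;> rcases zero_or_one hF y with hy | hy <;>
    subst hx <;> subst hy <;> simp [epsF, one_add_one_eq_zero hF]

lemma two_mul_indF (x : F) : 2 * indF F x = 1 - epsF F x := by
  by_cases h : x = 0 <;> simp [indF, epsF, h]

lemma four_mul_indF_mul (x y : F) :
    4 * (indF F x * indF F y) = (1 - epsF F x) * (1 - epsF F y) := by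
  by_cases hx : x = 0 <;> by_cases hy : y = 0 <;> simp [indF, epsF, hx, hy] <;> ring

variable {M : Type} [AddCommGroup M] [Module F M] [Fintype M]

lemma sum_epsF_eq_zero (hF : Fintype.card F = 2) (h : M →ₗ[F] F) (hh : h ≠ 0) :
    ∑ u : M, epsF F (h u) = 0 := by
  obtain ⟨u₁, hu₁⟩ : ∃ u, h u ≠ 0 := by
    by_contra hc
    push_neg at hc
    exact hh (LinearMap.ext fun u => by simpa using hc u)
  have h1 : h u₁ = 1 := eq_one_of_ne_zero hF hu₁
  have key : ∑ u : M, epsF F (h u) = ∑ u : M, epsF F (h (u + u₁)) :=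
    (Equiv.sum_comp (Equiv.addRight u₁) (fun v => epsF F (h v))).symm
  have key2 : ∀ u : M, epsF F (h (u + u₁)) = - epsF F (h u) := by
    intro u
    rw [map_add, epsF_add hF, h1]
    simp [epsF]
  rw [Finset.sum_congr rfl (fun u _ => key2 u), Finset.sum_neg_distrib] at key
  linarith

lemma two_mul_sum_indF (hF : Fintype.card F = 2) (h : M →ₗ[F] F) (hh : h ≠ 0) :
    2 * ∑ u : M, indF F (h u) = (Fintype.card M : ℤ) := by
  rw [Finset.mul_sum]
  calc ∑ u : M, 2 * indF F (h u) = ∑ u : M, (1 - epsF F (h u)) := by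
        exact Finset.sum_congr rfl fun u _ => two_mul_indF _
    _ = (Fintype.card M : ℤ) - ∑ u : M, epsF F (h u) := by
        rw [Finset.sum_sub_distrib]; simp [Finset.card_univ]
    _ = _ := by rw [sum_epsF_eq_zero hF h hh, sub_zero]

lemma four_mul_sum_indF_mul (hF : Fintype.card F = 2) (h h' : M →ₗ[F] F)
    (hh : h ≠ 0) (hh' : h' ≠ 0) :
    4 * ∑ u : M, indF F (h u) * indF F (h' u) =
      (if h = h' then 2 else 1) * (Fintype.card M : ℤ) := by
  have hsum : ∀ u : M, epsF F (h u) * epsF F (h' u) = epsF F ((h + h') u) := by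
    intro u
    rw [LinearMap.add_apply, epsF_add hF]
  have expand : ∀ u : M, 4 * (indF F (h u) * indF F (h' u)) =
      1 - epsF F (h u) - epsF F (h' u) + epsF F ((h + h') u) := by
    intro u
    rw [four_mul_indF_mul, ← hsum]
    ring
  rw [Finset.mul_sum]
  rw [Finset.sum_congr rfl (fun u _ => expand u)]
  have hE : ∑ u : M, epsF F ((h + h') u) = if h = h' then (Fintype.card M : ℤ) else 0 := by
    by_cases he : h = h'
    · subst he
      have : ∀ u : M, epsF F ((h + h) u) = 1 := by
        intro u
        rw [LinearMap.add_apply, add_self_eq_zero hF]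
        simp [epsF]
      rw [Finset.sum_congr rfl (fun u _ => this u)]
      simp [Finset.card_univ]
    · have hne : h + h' ≠ 0 := by
        intro hc
        apply he
        ext u
        have := congrArg (fun g : M →ₗ[F] F => g u) hc
        simp at this
        have h2 : h u + h' u + h' u = h' u := by rw [this, zero_add]
        rw [add_assoc, add_self_eq_zero hF, add_zero] at h2
        exact h2
      rw [sum_epsF_eq_zero hF _ hne]
      simp [he]
  rw [Finset.sum_add_distrib, Finset.sum_sub_distrib, Finset.sum_sub_distrib,
    sum_epsF_eq_zero hF h hh, sum_epsF_eq_zero hF h' hh', hE]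
  by_cases he : h = h' <;> simp [he, Finset.card_univ] <;> ring

section Coords

variable {F : Type} [Field F] [Fintype F] [DecidableEq F] {n m : ℕ}
  {U : Submodule F (Fin n → F)} {V : Submodule F (Fin m → F)}

/-- the i-th coordinate functional restricted to U -/
def inCoord (U : Submodule F (Fin n → F)) (i : Fin n) : U →ₗ[F] F :=
  (LinearMap.proj i).comp U.subtype

/-- the j-th coordinate functional of the output of φ -/
def outCoord (φ : U →ₗ[F] V) (j : Fin m) : U →ₗ[F] F :=
  ((LinearMap.proj j).comp V.subtype).comp φ

lemma inCoord_apply (i : Fin n) (u : U) : inCoord U i u = (u : Fin n → F) i := rfl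

lemma outCoord_apply (φ : U →ₗ[F] V) (j : Fin m) (u : U) :
    outCoord φ j u = ((φ u : V) : Fin m → F) j := rfl

lemma counts_of_isProjection (hF : Fintype.card F = 2) (φ : U →ₗ[F] V)
    (hproj : IsProjection φ) (f : U →ₗ[F] F) (hf : f ≠ 0) :
    (Finset.univ.filter fun j => outCoord φ j = f).card ≤
      (Finset.univ.filter fun i => inCoord U i = f).card := by
  classical
  obtain ⟨M, hM, hrow, hcol⟩ := hproj
  rcases Finset.eq_empty_or_nonempty (Finset.univ.filter fun j => outCoord φ j = f) with
    he | ⟨j₀, hj₀⟩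
  · simp [he]
  · have hex : ∀ j : Fin m, outCoord φ j = f → ∃ i, M j i ≠ 0 := by
      intro j hj
      by_contra hc
      push_neg at hc
      apply hf
      rw [← hj]
      ext u
      have hz : ((φ u : V) : Fin m → F) j = 0 := by
        rw [hM u]
        show ∑ i, M j i * (u : Fin n → F) i = 0
        exact Finset.sum_eq_zero fun i _ => by rw [hc i, zero_mul]
      simpa [outCoord_apply] using hz
    have hj₀f : outCoord φ j₀ = f := (Finset.mem_filter.mp hj₀).2
    obtain ⟨i₀, hi₀⟩ := hex j₀ hj₀f
    haveI : Nonempty (Fin n) := ⟨i₀⟩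
    set pick : Fin m → Fin n :=
      fun j => if h : ∃ i, M j i ≠ 0 then h.choose else Classical.arbitrary _ with hpick
    have hpickspec : ∀ j : Fin m, outCoord φ j = f → M j (pick j) ≠ 0 := by
      intro j hj
      have hx := hex j hj
      rw [hpick]
      simp only [dif_pos hx]
      exact hx.choose_spec
    apply Finset.card_le_card_of_injOn pick
    · intro j hj
      have hjf := (Finset.mem_filter.mp hj).2
      have hMj : M j (pick j) ≠ 0 := hpickspec j hjf
      simp only [Finset.mem_coe, Finset.mem_filter, Finset.mem_univ, true_and]
      rw [← hjf]
      ext u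
      rw [inCoord_apply, outCoord_apply, hM u]
      show (u : Fin n → F) (pick j) = ∑ i, M j i * (u : Fin n → F) i
      rw [Finset.sum_eq_single (pick j)]
      · rw [eq_one_of_ne_zero hF hMj, one_mul]
      · intro i _ hne
        by_cases hz : M j i = 0
        · rw [hz, zero_mul]
        · exact absurd (hrow j i (pick j) hz hMj) hne
      · intro hni; exact absurd (Finset.mem_univ _) hni
    · intro j hj j' hj' hpp
      have hjf := (Finset.mem_filter.mp (Finset.mem_coe.mp hj)).2
      have hjf' := (Finset.mem_filter.mp (Finset.mem_coe.mp hj')).2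
      exact hcol j j' (pick j) (hpickspec j hjf) (hpp ▸ hpickspec j' hjf')

lemma isProjection_of_counts (hF : Fintype.card F = 2) (φ : U →ₗ[F] V)
    (hc : ∀ f : U →ₗ[F] F, f ≠ 0 →
      (Finset.univ.filter fun j => outCoord φ j = f).card ≤
        (Finset.univ.filter fun i => inCoord U i = f).card) :
    IsProjection φ := by
  classical
  have key : ∀ f : U →ₗ[F] F, ∃ g : Fin m → Option (Fin n),
      (f ≠ 0 → ((∀ j, outCoord φ j = f → ∃ i, g j = some i ∧ inCoord U i = f) ∧
        (∀ j j' i, g j = some i → g j' = some i → j = j'))) := by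
    intro f
    by_cases hf : f = 0
    · exact ⟨fun _ => none, fun h => absurd hf h⟩
    · have hcard : Fintype.card {j : Fin m // outCoord φ j = f} ≤
          Fintype.card {i : Fin n // inCoord U i = f} := by
        rw [Fintype.card_subtype, Fintype.card_subtype]
        exact hc f hf
      obtain ⟨e⟩ : Nonempty ({j : Fin m // outCoord φ j = f} ↪ {i : Fin n // inCoord U i = f}) :=
        ⟨((Fintype.equivFin _).toEmbedding.trans ((Fin.castLEEmb hcard).trans
          (Fintype.equivFin _).symm.toEmbedding))⟩
      refine ⟨fun j => if h : outCoord φ j = f then some (e ⟨j, h⟩ : {i // inCoord U i = f})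
        else none, fun _ => ⟨?_, ?_⟩⟩
      · intro j hj
        exact ⟨(e ⟨j, hj⟩ : {i // inCoord U i = f}), by simp only [dif_pos hj], (e ⟨j, hj⟩).2⟩
      · intro j j' i h1 h2
        by_cases hj : outCoord φ j = f
        · by_cases hj' : outCoord φ j' = f
          · simp only [dif_pos hj, Option.some_inj] at h1
            simp only [dif_pos hj', Option.some_inj] at h2
            have hv : (e ⟨j, hj⟩ : {i // inCoord U i = f}) = (e ⟨j', hj'⟩ : {i // inCoord U i = f}) :=
              Subtype.ext (by rw [h1, h2])
            exact congrArg Subtype.val (e.injective hv)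
          · simp only [dif_neg hj'] at h2
            exact absurd h2 (by simp)
        · simp only [dif_neg hj] at h1
          exact absurd h1 (by simp)
  choose g hg using key
  have hcond : ∀ {j : Fin m} {i : Fin n},
      (if (outCoord φ j ≠ 0 ∧ g (outCoord φ j) j = some i) then (1:F) else 0) ≠ 0 →
      outCoord φ j ≠ 0 ∧ g (outCoord φ j) j = some i := by
    intro j i h
    by_contra hcon
    rw [if_neg hcon] at h
    exact h rfl
  refine ⟨fun j i => if (outCoord φ j ≠ 0 ∧ g (outCoord φ j) j = some i) then 1 else 0,
    ?_, ?_, ?_⟩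
  · intro u
    funext j
    show ((φ u : V) : Fin m → F) j =
      ∑ i, (if (outCoord φ j ≠ 0 ∧ g (outCoord φ j) j = some i) then (1:F) else 0) *
        (u : Fin n → F) i
    by_cases h0 : outCoord φ j = 0
    · rw [← outCoord_apply, h0]
      simp [h0]
    · obtain ⟨hprop, _⟩ := hg (outCoord φ j) h0
      obtain ⟨istar, hsome, hin⟩ := hprop j rfl
      have hsum : (∑ i, (if (outCoord φ j ≠ 0 ∧ g (outCoord φ j) j = some i) then (1:F) else 0) *
          (u : Fin n → F) i) = (u : Fin n → F) istar := by
        rw [Finset.sum_congr rfl (fun i _ => by rw [hsome])]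
        simp only [h0, ne_eq, not_false_iff, true_and, Option.some_inj, ite_mul, one_mul,
          zero_mul]
        rw [Finset.sum_ite_eq]
        simp
      rw [hsum, ← outCoord_apply, ← hin, inCoord_apply]
  · intro j i i' h h'
    obtain ⟨_, hs⟩ := hcond h
    obtain ⟨_, hs'⟩ := hcond h'
    rw [hs] at hs'
    exact Option.some_inj.mp hs'
  · intro j j' i h h'
    obtain ⟨h0, hs⟩ := hcond h
    obtain ⟨h0', hs'⟩ := hcond h'
    obtain ⟨i₁, hsome₁, hin₁⟩ := (hg (outCoord φ j) h0).1 j rfl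
    rw [hs, Option.some_inj] at hsome₁
    subst hsome₁
    obtain ⟨i₂, hsome₂, hin₂⟩ := (hg (outCoord φ j') h0').1 j' rfl
    rw [hs', Option.some_inj] at hsome₂
    subst hsome₂
    have hff : outCoord φ j = outCoord φ j' := by rw [← hin₁, ← hin₂]
    rw [hff] at hs
    exact (hg (outCoord φ j') h0').2 j j' i hs hs'

end Coords

lemma exists_dual_ne_zero_vanish {K W : Type*} [Field K] [AddCommGroup W] [Module K W]
    (u₀ u₁ : W) (h0 : u₀ ≠ 0) (h1 : u₁ ∉ Submodule.span K ({u₀} : Set W)) :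
    ∃ f : W →ₗ[K] K, f u₀ = 0 ∧ f ≠ 0 := by
  have hne01 : u₀ ≠ u₁ := by
    intro h
    subst h
    exact h1 (Submodule.mem_span_singleton_self _)
  have hne : u₁ ∉ ({u₀} : Set W) := by
    rw [Set.mem_singleton_iff]
    exact fun h => hne01 h.symm
  have hind : LinearIndepOn K id ({u₀} : Set W) :=
    LinearIndepOn.singleton (v := id) h0
  have hins : LinearIndepOn K id (insert u₁ ({u₀} : Set W) : Set W) :=
    (linearIndepOn_id_insert hne).mpr ⟨hind, h1⟩
  have hsub : (insert u₁ ({u₀} : Set W) : Set W) ⊆ hins.extend (Set.subset_univ _) :=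
    hins.subset_extend _
  have hmem₁ : u₁ ∈ hins.extend (Set.subset_univ _) := hsub (Set.mem_insert _ _)
  have hmem₀ : u₀ ∈ hins.extend (Set.subset_univ _) := hsub (Set.mem_insert_iff.mpr (Or.inr rfl))
  refine ⟨(Module.Basis.extend hins).coord ⟨u₁, hmem₁⟩, ?_, ?_⟩
  · have h := (Module.Basis.extend hins).repr_self ⟨u₀, hmem₀⟩
    rw [Module.Basis.extend_apply_self] at h
    rw [Module.Basis.coord_apply, h, Finsupp.single_apply, if_neg]
    intro hxx
    exact hne01 (congrArg Subtype.val hxx)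
  · intro hzero
    have hone : (Module.Basis.extend hins).coord ⟨u₁, hmem₁⟩ u₁ = 1 := by
      have h := (Module.Basis.extend hins).repr_self ⟨u₁, hmem₁⟩
      rw [Module.Basis.extend_apply_self] at h
      rw [Module.Basis.coord_apply, h]
      simp
    rw [hzero] at hone
    simp at hone

lemma sum_ite_card {α : Type*} [Fintype α] (P : α → Prop) [DecidablePred P] (c : ℤ) :
    ∑ x : α, (if P x then c else 0) = c * ((Finset.univ.filter fun x => P x).card : ℤ) := by
  rw [Finset.sum_ite, Finset.sum_const, Finset.sum_const]
  simp [mul_comm]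

lemma sum_ite_zero_card {α : Type*} [Fintype α] (P : α → Prop) [DecidablePred P] (c : ℤ) :
    ∑ x : α, (if P x then 0 else c) =
      c * ((Finset.univ.filter fun x => ¬ P x).card : ℤ) := by
  rw [Finset.sum_ite, Finset.sum_const, Finset.sum_const]
  simp [mul_comm]

lemma hammingNorm_cast {F : Type} [Field F] [Fintype F] [DecidableEq F] {n : ℕ}
    (x : Fin n → F) : (hammingNorm x : ℤ) = ∑ i, indF F (x i) := by
  unfold hammingNorm indF
  rw [Finset.card_filter]
  push_cast
  exact Finset.sum_congr rfl fun i _ => by by_cases h : x i = 0 <;> simp [h]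

/-- the weight-change function on vectors -/
def wdiff {F : Type} [Field F] [Fintype F] [DecidableEq F] {n m : ℕ}
    {U : Submodule F (Fin n → F)} {V : Submodule F (Fin m → F)} (φ : U →ₗ[F] V) : U → ℤ :=
  fun u => (hammingNorm (u : Fin n → F) : ℤ) - (hammingNorm ((φ u : V) : Fin m → F) : ℤ)

lemma projWeightChanges_eq {F : Type} [Field F] [Fintype F] [DecidableEq F] {n m : ℕ}
    {U : Submodule F (Fin n → F)} {V : Submodule F (Fin m → F)} (φ : U →ₗ[F] V) :
    projWeightChanges φ = (Finset.univ : Finset (Projectivization F U)).val.map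
      (fun p => wdiff φ p.rep) := rfl

lemma double_sum_swap_sub {α β γ : Type*} [Fintype α] [Fintype β] [Fintype γ]
    (f : α → β → ℤ) (g : α → γ → ℤ) :
    ∑ u : α, ((∑ i : β, f u i) - (∑ j : γ, g u j)) =
      (∑ i : β, ∑ u : α, f u i) - (∑ j : γ, ∑ u : α, g u j) := by
  rw [Finset.sum_sub_distrib]
  congr 1
  · exact Finset.sum_comm
  · exact Finset.sum_comm

lemma core {F : Type} [Field F] [Fintype F] [DecidableEq F] (hF : Fintype.card F = 2)
    {n m k : ℕ} (hk : 2 ≤ k) {U : Submodule F (Fin n → F)} {V : Submodule F (Fin m → F)}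
    (φ : U →ₗ[F] V) (a b : ℕ)
    (hS : projWeightChanges φ = Multiset.replicate (2 ^ k - 2) (a : ℤ) + {(b : ℤ)}) :
    ((2 : ℤ) ^ (k - 1) ∣ (b : ℤ) - 2 * a) ∧
      (b ≤ 2 * a → IsProjection φ) ∧ (2 * a < b → ¬IsProjection φ) := by
  classical
  have h4 : 4 ≤ 2 ^ k := by
    calc (4:ℕ) = 2 ^ 2 := by norm_num
    _ ≤ 2 ^ k := Nat.pow_le_pow_right (by norm_num) hk
  rw [projWeightChanges_eq] at hS
  -- cardinalities
  have hcard1 : Fintype.card (Projectivization F U) = 2 ^ k - 2 + 1 := by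
    have hc := congrArg Multiset.card hS
    simp only [Multiset.card_map, Multiset.card_add, Multiset.card_replicate,
      Multiset.card_singleton] at hc
    simpa [Finset.card_univ] using hc
  have hrepmk : ∀ (u : U) (hu : u ≠ 0), (Projectivization.mk F u hu).rep = u := by
    intro u hu
    have h := Projectivization.mk_rep (Projectivization.mk F u hu)
    rw [Projectivization.mk_eq_mk_iff] at h
    obtain ⟨c, hc⟩ := h
    have hc1 : (c : F) = 1 := eq_one_of_ne_zero hF c.ne_zero
    rw [← hc, Units.smul_def, hc1, one_smul]
  have e : Projectivization F U ≃ {u : U // u ≠ 0} :=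
    { toFun := fun p => ⟨p.rep, p.rep_nonzero⟩
      invFun := fun u => Projectivization.mk F u.1 u.2
      left_inv := fun p => Projectivization.mk_rep p
      right_inv := fun u => Subtype.ext (hrepmk u.1 u.2) }
  have hcardU : Fintype.card U = 2 ^ k := by
    have h1 : Fintype.card (Projectivization F U) = Fintype.card {u : U // u ≠ 0} :=
      Fintype.card_congr e
    have h2 : Fintype.card {u : U // u ≠ 0} = Fintype.card U - Fintype.card {u : U // u = 0} :=
      Fintype.card_subtype_compl _
    have h3 : Fintype.card {u : U // u = 0} = 1 := Fintype.card_subtype_eq (0 : U)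
    have h5 : 0 < Fintype.card U := Fintype.card_pos
    omega
  -- extract the exceptional point
  obtain ⟨p₀, hp₀⟩ : ∃ p₀ : Projectivization F U, wdiff φ p₀.rep = (b : ℤ) := by
    have hbmem : (b:ℤ) ∈ Multiset.replicate (2 ^ k - 2) (a:ℤ) + {(b:ℤ)} := by simp
    rw [← hS] at hbmem
    obtain ⟨p₀, _, hp₀⟩ := Multiset.mem_map.mp hbmem
    exact ⟨p₀, hp₀⟩
  have hrest : ∀ p : Projectivization F U, p ≠ p₀ → wdiff φ p.rep = (a : ℤ) := by
    have hmem : p₀ ∈ (Finset.univ.val : Multiset (Projectivization F U)) :=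
      Finset.mem_val.mpr (Finset.mem_univ _)
    have hcons : (Finset.univ.val : Multiset (Projectivization F U)) =
        p₀ ::ₘ (Finset.univ.val.erase p₀) := (Multiset.cons_erase hmem).symm
    rw [hcons, Multiset.map_cons, hp₀] at hS
    have hsingle : Multiset.replicate (2 ^ k - 2) (a:ℤ) + {(b:ℤ)} =
        (b:ℤ) ::ₘ Multiset.replicate (2 ^ k - 2) (a:ℤ) := by
      rw [add_comm, Multiset.singleton_add]
    rw [hsingle] at hS
    have hrep := (Multiset.cons_inj_right _).mp hS
    intro p hp
    have hpmem : p ∈ Finset.univ.val.erase p₀ := (Multiset.mem_erase_of_ne hp).mpr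
      (Finset.mem_val.mpr (Finset.mem_univ _))
    exact Multiset.eq_of_mem_replicate (hrep ▸ Multiset.mem_map_of_mem _ hpmem)
  set u₀ : U := p₀.rep with hu₀def
  have hu₀ : u₀ ≠ 0 := p₀.rep_nonzero
  have hδ0 : wdiff φ 0 = 0 := by
    unfold wdiff
    simp
  have hδval : ∀ u : U, wdiff φ u =
      (a:ℤ) + (if u = u₀ then (b:ℤ) - a else 0) + (if u = 0 then -(a:ℤ) else 0) := by
    intro u
    by_cases h0 : u = 0
    · subst h0
      rw [hδ0, if_neg (fun h => hu₀ h.symm), if_pos rfl]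
      ring
    · by_cases h1 : u = u₀
      · subst h1
        have hval : wdiff φ u₀ = (b : ℤ) := hp₀
        rw [hval, if_pos rfl, if_neg h0]
        ring
      · have hne : Projectivization.mk F u h0 ≠ p₀ := by
          intro he
          apply h1
          rw [← hrepmk u h0, he]
        have := hrest _ hne
        rw [hrepmk u h0] at this
        rw [this, if_neg h1, if_neg h0]
        ring
  have hwd : ∀ u : U, wdiff φ u =
      (∑ i, indF F (inCoord U i u)) - (∑ j, indF F (outCoord φ j u)) := by
    intro u
    unfold wdiff
    rw [hammingNorm_cast, hammingNorm_cast]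
    simp [inCoord_apply, outCoord_apply]
  -- total sum, two ways
  have hsumdelta : ∑ u : U, wdiff φ u = 2 ^ k * (a:ℤ) + b - 2 * a := by
    rw [Finset.sum_congr rfl (fun u _ => hδval u)]
    rw [Finset.sum_add_distrib, Finset.sum_add_distrib, Finset.sum_const, Finset.card_univ,
      hcardU, Finset.sum_ite_eq' Finset.univ u₀ (fun _ => (b:ℤ) - a),
      Finset.sum_ite_eq' Finset.univ (0 : U) (fun _ => -(a:ℤ))]
    simp only [Finset.mem_univ, if_pos]
    push_cast
    ring
  have hTd : ∀ h : U →ₗ[F] F, 2 * (∑ u : U, indF F (h u)) =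
      (if h = 0 then 0 else (2:ℤ)^k) := by
    intro h
    by_cases h0 : h = 0
    · subst h0
      simp [indF]
    · rw [two_mul_sum_indF hF h h0, hcardU, if_neg h0]
      push_cast
      ring
  have hsumA' : 2 * ∑ u : U, wdiff φ u =
      (2:ℤ)^k * (((Finset.univ.filter fun i => ¬ inCoord U i = 0).card : ℤ) -
        ((Finset.univ.filter fun j => ¬ outCoord φ j = 0).card : ℤ)) := by
    calc 2 * ∑ u : U, wdiff φ u
        = 2 * ((∑ i, ∑ u : U, indF F (inCoord U i u)) -
            (∑ j, ∑ u : U, indF F (outCoord φ j u))) := by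
          rw [Finset.sum_congr rfl (fun u _ => hwd u), double_sum_swap_sub]
      _ = (∑ i, 2 * ∑ u : U, indF F (inCoord U i u)) -
            (∑ j, 2 * ∑ u : U, indF F (outCoord φ j u)) := by
          rw [mul_sub, Finset.mul_sum, Finset.mul_sum]
      _ = (∑ i, if inCoord U i = 0 then 0 else (2:ℤ)^k) -
            (∑ j, if outCoord φ j = 0 then 0 else (2:ℤ)^k) := by
          rw [Finset.sum_congr rfl (fun i _ => hTd _), Finset.sum_congr rfl (fun j _ => hTd _)]
      _ = _ := by
          rw [sum_ite_zero_card, sum_ite_zero_card, mul_sub]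
  have hdiv : (2 : ℤ) ^ (k - 1) ∣ (b : ℤ) - 2 * a := by
    have h2k : (2:ℤ)^k = 2 * 2^(k-1) := by
      conv_lhs => rw [show k = (k-1) + 1 by omega]
      rw [pow_succ]
      ring
    set c : ℤ := ((Finset.univ.filter fun i => ¬ inCoord U i = 0).card : ℤ) -
        ((Finset.univ.filter fun j => ¬ outCoord φ j = 0).card : ℤ) with hc
    refine ⟨c - 2 * a, ?_⟩
    have heq : 2 * (2 ^ k * (a:ℤ) + b - 2 * a) = 2^k * c := by rw [← hsumdelta, hsumA']
    rw [h2k] at heq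
    apply mul_left_cancel₀ (two_ne_zero (α := ℤ))
    linear_combination heq
  -- the key per-functional identity
  have hkey : ∀ f₀ : U →ₗ[F] F, f₀ ≠ 0 →
      (2:ℤ)^k * (((Finset.univ.filter fun i => inCoord U i = f₀).card : ℤ) -
        ((Finset.univ.filter fun j => outCoord φ j = f₀).card : ℤ)) =
      4 * ((b:ℤ) - a) * indF F (f₀ u₀) - 2 * b + 4 * a := by
    intro f₀ hf₀
    have hvw : ∀ h : U →ₗ[F] F,
        4 * (∑ u : U, indF F (h u) * indF F (f₀ u)) - 2 * (∑ u : U, indF F (h u)) =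
        (if h = f₀ then (2:ℤ)^k else 0) := by
      intro h
      by_cases h0 : h = 0
      · subst h0
        rw [if_neg (fun he => hf₀ he.symm)]
        simp [indF]
      · rw [four_mul_sum_indF_mul hF h f₀ h0 hf₀, two_mul_sum_indF hF h h0, hcardU]
        by_cases he : h = f₀
        · rw [if_pos he, if_pos he]
          push_cast
          ring
        · rw [if_neg he, if_neg he]
          push_cast
          ring
    have hBA : 4 * (∑ u : U, wdiff φ u * indF F (f₀ u)) - 2 * (∑ u : U, wdiff φ u) =
        (2:ℤ)^k * (((Finset.univ.filter fun i => inCoord U i = f₀).card : ℤ) -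
          ((Finset.univ.filter fun j => outCoord φ j = f₀).card : ℤ)) := by
      have hstep1 : (∑ u : U, wdiff φ u * indF F (f₀ u)) =
          (∑ i, ∑ u : U, indF F (inCoord U i u) * indF F (f₀ u)) -
            (∑ j, ∑ u : U, indF F (outCoord φ j u) * indF F (f₀ u)) := by
        rw [Finset.sum_congr rfl
          (fun u _ => by rw [hwd u, sub_mul, Finset.sum_mul, Finset.sum_mul]),
          double_sum_swap_sub]
      have hstep2 : (∑ u : U, wdiff φ u) =
          (∑ i, ∑ u : U, indF F (inCoord U i u)) -
            (∑ j, ∑ u : U, indF F (outCoord φ j u)) := by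
        rw [Finset.sum_congr rfl (fun u _ => hwd u), double_sum_swap_sub]
      rw [hstep1, hstep2, mul_sub, mul_sub, sub_sub_sub_comm, Finset.mul_sum, Finset.mul_sum,
        Finset.mul_sum, Finset.mul_sum, ← Finset.sum_sub_distrib, ← Finset.sum_sub_distrib,
        Finset.sum_congr rfl (fun i _ => hvw (inCoord U i)),
        Finset.sum_congr rfl (fun j _ => hvw (outCoord φ j)),
        sum_ite_card, sum_ite_card, mul_sub]
    have hpt : ∀ u : U, (wdiff φ u) * indF F (f₀ u) =
        (a:ℤ) * indF F (f₀ u) + (if u = u₀ then ((b:ℤ) - a) * indF F (f₀ u₀) else 0) := by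
      intro u
      rw [hδval u]
      by_cases h0 : u = 0
      · subst h0
        rw [if_neg (fun h => hu₀ h.symm), if_pos rfl, if_neg (fun h => hu₀ h.symm)]
        have : f₀ (0 : U) = 0 := map_zero f₀
        rw [this]
        simp [indF]
      · by_cases h1 : u = u₀
        · subst h1
          rw [if_pos rfl, if_neg h0, if_pos rfl]
          ring
        · rw [if_neg h1, if_neg h0, if_neg h1]
          ring
    have hSumB2 : 2 * (∑ u : U, wdiff φ u * indF F (f₀ u)) =
        (2:ℤ)^k * a + 2 * ((b:ℤ) - a) * indF F (f₀ u₀) := by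
      rw [Finset.sum_congr rfl (fun u _ => hpt u), Finset.sum_add_distrib,
        ← Finset.mul_sum, Finset.sum_ite_eq' Finset.univ u₀
          (fun _ => ((b:ℤ) - a) * indF F (f₀ u₀))]
      simp only [Finset.mem_univ, if_pos]
      have h2s := two_mul_sum_indF hF f₀ hf₀
      rw [hcardU] at h2s
      push_cast at h2s ⊢
      linear_combination (a : ℤ) * h2s
    linear_combination (-1 : ℤ) * hBA + 2 * hSumB2 + (-2 : ℤ) * hsumdelta
  have hpow : (0:ℤ) < 2^k := by positivity
  refine ⟨hdiv, ?_, ?_⟩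
  · intro hba
    apply isProjection_of_counts hF φ
    intro f hf
    have hk2 := hkey f hf
    have hba' : (b:ℤ) ≤ 2 * a := by exact_mod_cast hba
    have hnn : 0 ≤ (2:ℤ)^k * (((Finset.univ.filter fun i => inCoord U i = f).card : ℤ) -
        ((Finset.univ.filter fun j => outCoord φ j = f).card : ℤ)) := by
      rw [hk2]
      by_cases h : f u₀ = 0 <;> simp [indF, h] <;> linarith
    have hge : ((Finset.univ.filter fun j => outCoord φ j = f).card : ℤ) ≤
        ((Finset.univ.filter fun i => inCoord U i = f).card : ℤ) := by
      nlinarith [hpow, hnn]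
    exact_mod_cast hge
  · intro h2ab hproj
    have hex : ∃ u₁ : U, u₁ ∉ Submodule.span F ({u₀} : Set U) := by
      by_contra hcon
      push_neg at hcon
      have hall : ∀ u : U, u = 0 ∨ u = u₀ := by
        intro u
        obtain ⟨cc, hcc⟩ := Submodule.mem_span_singleton.mp (hcon u)
        rcases zero_or_one hF cc with h | h
        · left; rw [← hcc, h, zero_smul]
        · right; rw [← hcc, h, one_smul]
      have hsub : (Finset.univ : Finset U) ⊆ {0, u₀} := by
        intro u _
        rcases hall u with h | h <;> simp [h]
      have hle : Fintype.card U ≤ 2 := by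
        calc Fintype.card U = (Finset.univ : Finset U).card := (Finset.card_univ).symm
          _ ≤ ({0, u₀} : Finset U).card := Finset.card_le_card hsub
          _ ≤ 2 := Finset.card_insert_le _ _ |>.trans (by simp)
      omega
    obtain ⟨u₁, hu₁⟩ := hex
    obtain ⟨f₀, hf₀0, hf₀ne⟩ := exists_dual_ne_zero_vanish u₀ u₁ hu₀ hu₁
    have hk2 := hkey f₀ hf₀ne
    have hι : indF F (f₀ u₀) = 0 := by simp [indF, hf₀0]
    rw [hι] at hk2
    have hle := counts_of_isProjection hF φ hproj f₀ hf₀ne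
    have hle' : ((Finset.univ.filter fun j => outCoord φ j = f₀).card : ℤ) ≤
        ((Finset.univ.filter fun i => inCoord U i = f₀).card : ℤ) := by exact_mod_cast hle
    have h2ab' : 2 * (a:ℤ) < b := by exact_mod_cast h2ab
    nlinarith [hpow, hk2, hle', h2ab']

end Stmt8Aux


/-- for `S` consisting of `2^k - 2` copies of `a` and one copy of `b`,
realized by some F₂-linear map, TFAE: (1) S is 2-projection-forcing; (2) b ≤ 2a;
(3) b < 2a + 2^(k-1). -/
theorem stmt_8 (a b k : ℕ) (hk : 2 ≤ k)
    (hreal : Realizes (ZMod 2) (Multiset.replicate (2 ^ k - 2) (a : ℤ) + {(b : ℤ)})) :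
    (ProjectionForcing 2 (Multiset.replicate (2 ^ k - 2) (a : ℤ) + {(b : ℤ)}) ↔ b ≤ 2 * a) ∧
      (b ≤ 2 * a ↔ b < 2 * a + 2 ^ (k - 1)) := by
  obtain ⟨n, m, U, V, φ, hφ⟩ := hreal
  have hF2 : Fintype.card (ZMod 2) = 2 := by simp
  obtain ⟨hdiv, hproj_of, hnotproj⟩ := Stmt8Aux.core hF2 hk φ a b hφ
  constructor
  · constructor
    · intro hPF
      by_contra hgt
      push_neg at hgt
      exact hnotproj hgt (hPF (ZMod 2) hF2 n m U V φ hφ)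
    · intro hba
      intro F _ _ _ hcF n' m' U' V' φ' hφ'
      exact (Stmt8Aux.core hcF hk φ' a b hφ').2.1 hba
  · constructor
    · intro hba
      have hp : 0 < 2 ^ (k - 1) := Nat.pow_pos (by norm_num)
      omega
    · intro hlt
      obtain ⟨c, hc⟩ := hdiv
      have hlt' : (b:ℤ) < 2 * a + 2 ^ (k - 1) := by exact_mod_cast hlt
      have hp : (0:ℤ) < 2 ^ (k - 1) := by positivity
      have hc1 : c < 1 := by
        by_contra hcon
        push_neg at hcon
        have h1 : (2:ℤ) ^ (k - 1) * 1 ≤ 2 ^ (k - 1) * c :=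
          mul_le_mul_of_nonneg_left hcon (le_of_lt hp)
        linarith
      have hc0 : c ≤ 0 := by omega
      have hfin : (b:ℤ) ≤ 2 * a := by
        have hnp : (2:ℤ) ^ (k - 1) * c ≤ 0 :=
          mul_nonpos_iff.mpr (Or.inl ⟨hp.le, hc0⟩)
        linarith
      exact_mod_cast hfin
end
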